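/- arXiv:2404.10325 — 5 statements merged into one kernel-verified Lean document; each statement's English description precedes it below -/
import Mathlib

section
/- For every realization of the colors, the modularity admits the decomposition Q_n = ((1 − p_{(2)})/(2m)) Σ_{i=1}^n B_{ii} + (1/m) Σ_{1≤i<j≤n} B_{ij} h̄(c_i, c_j) − (1/m) Σ_{i=1}^n B_{ii} (p_{c_i} − p_{(2)}). -/
open Finset

/-- The decomposition of the modularity (equation (4.1) of the paper). -/
theorem modularity_decomposition
    (n : ℕ) (A : ℕ → ℕ → ℝ) (m : ℕ) (k : ℕ → ℝ)
    (hA01 : ∀ i ∈ Icc 1 n, ∀ j ∈ Icc 1 n, A i j = 0 ∨ A i j = 1)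
    (hAsymm : ∀ i ∈ Icc 1 n, ∀ j ∈ Icc 1 n, A i j = A j i)
    (hAdiag : ∀ i ∈ Icc 1 n, A i i = 0)
    (hm : 1 ≤ m)
    (hk : ∀ i ∈ Icc 1 n, k i = ∑ j ∈ Icc 1 n, A i j)
    (hksum : ∑ i ∈ Icc 1 n, k i = 2 * (m : ℝ))
    (K : ℕ) (hK : 1 ≤ K) (p : ℕ → ℝ)
    (hp0 : ∀ j ∈ Icc 1 K, 0 ≤ p j) (hp1 : ∑ j ∈ Icc 1 K, p j = 1)
    (p2 : ℝ) (hp2 : p2 = ∑ j ∈ Icc 1 K, (p j) ^ 2)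
    (c : ℕ → ℕ) (hc : ∀ i ∈ Icc 1 n, c i ∈ Icc 1 K)
    (B : ℕ → ℕ → ℝ) (hB : ∀ i j, B i j = A i j - k i * k j / (2 * (m : ℝ)))
    (hbar : ℕ → ℕ → ℝ)
    (hhbar : ∀ x y, hbar x y = (if x = y then (1 : ℝ) else 0) - p x - p y + p2)
    (Q : ℝ)
    (hQ : Q = (1 / (2 * (m : ℝ))) *
      ∑ i ∈ Icc 1 n, ∑ j ∈ Icc 1 n, B i j * (if c i = c j then (1 : ℝ) else 0)) :
    Q = ((1 - p2) / (2 * (m : ℝ))) * (∑ i ∈ Icc 1 n, B i i)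
      + (1 / (m : ℝ)) * ∑ i ∈ Icc 1 n, ∑ j ∈ Ioc i n, B i j * hbar (c i) (c j)
      - (1 / (m : ℝ)) * ∑ i ∈ Icc 1 n, B i i * (p (c i) - p2) := by
  have hm0 : (2 * (m : ℝ)) ≠ 0 := by positivity
  -- row sums of B vanish
  have hrow : ∀ i ∈ Icc 1 n, ∑ j ∈ Icc 1 n, B i j = 0 := by
    intro i hi
    simp only [hB]
    rw [Finset.sum_sub_distrib, ← hk i hi]
    have : ∑ j ∈ Icc 1 n, k i * k j / (2 * (m : ℝ))
        = (∑ j ∈ Icc 1 n, k j) * (k i / (2 * (m : ℝ))) := by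
      rw [Finset.sum_mul]
      exact Finset.sum_congr rfl fun j _ => by ring
    rw [this, hksum]
    field_simp
    ring
  have hBsymm : ∀ i ∈ Icc 1 n, ∀ j ∈ Icc 1 n, B i j = B j i := by
    intro i hi j hj
    rw [hB, hB, hAsymm i hi j hj]; ring
  -- column sums vanish
  have hcol : ∀ j ∈ Icc 1 n, ∑ i ∈ Icc 1 n, B i j = 0 := by
    intro j hj
    rw [Finset.sum_congr rfl (fun i hi => hBsymm i hi j hj)]
    exact hrow j hj
  -- step A: replace delta by hbar
  have stepA : ∑ i ∈ Icc 1 n, ∑ j ∈ Icc 1 n, B i j * (if c i = c j then (1 : ℝ) else 0)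
      = ∑ i ∈ Icc 1 n, ∑ j ∈ Icc 1 n, B i j * hbar (c i) (c j) := by
    have expand : ∀ i j : ℕ, B i j * (if c i = c j then (1 : ℝ) else 0)
        = B i j * hbar (c i) (c j) + B i j * p (c i) + B i j * p (c j) - B i j * p2 := by
      intro i j; rw [hhbar]; ring
    simp only [expand]
    have h1 : ∑ i ∈ Icc 1 n, ∑ j ∈ Icc 1 n, B i j * p (c i) = 0 := by
      refine Finset.sum_eq_zero fun i hi => ?_
      rw [← Finset.sum_mul, hrow i hi, zero_mul]
    have h2 : ∑ i ∈ Icc 1 n, ∑ j ∈ Icc 1 n, B i j * p (c j) = 0 := by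
      rw [Finset.sum_comm]
      refine Finset.sum_eq_zero fun j hj => ?_
      rw [← Finset.sum_mul, hcol j hj, zero_mul]
    have h3 : ∑ i ∈ Icc 1 n, ∑ j ∈ Icc 1 n, B i j * p2 = 0 := by
      refine Finset.sum_eq_zero fun i hi => ?_
      rw [← Finset.sum_mul, hrow i hi, zero_mul]
    calc ∑ i ∈ Icc 1 n, ∑ j ∈ Icc 1 n,
          (B i j * hbar (c i) (c j) + B i j * p (c i) + B i j * p (c j) - B i j * p2)
        = (∑ i ∈ Icc 1 n, ∑ j ∈ Icc 1 n, B i j * hbar (c i) (c j))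
          + (∑ i ∈ Icc 1 n, ∑ j ∈ Icc 1 n, B i j * p (c i))
          + (∑ i ∈ Icc 1 n, ∑ j ∈ Icc 1 n, B i j * p (c j))
          - (∑ i ∈ Icc 1 n, ∑ j ∈ Icc 1 n, B i j * p2) := by
          simp [Finset.sum_add_distrib, Finset.sum_sub_distrib]
      _ = ∑ i ∈ Icc 1 n, ∑ j ∈ Icc 1 n, B i j * hbar (c i) (c j) := by
          rw [h1, h2, h3]; ring
  -- f is symmetric
  set f : ℕ → ℕ → ℝ := fun i j => B i j * hbar (c i) (c j) with hf
  have hfsymm : ∀ i ∈ Icc 1 n, ∀ j ∈ Icc 1 n, f i j = f j i := by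
    intro i hi j hj
    have he : (if c i = c j then (1:ℝ) else 0) = (if c j = c i then 1 else 0) := by
      simp [eq_comm]
    simp only [hf, hBsymm i hi j hj, hhbar, he]
    ring
  -- step B: split square sum
  have split : ∀ i ∈ Icc 1 n, ∑ j ∈ Icc 1 n, f i j
      = (∑ j ∈ Ico 1 i, f i j) + f i i + ∑ j ∈ Ioc i n, f i j := by
    intro i hi
    simp only [mem_Icc] at hi
    have hu : Icc 1 n = Icc 1 i ∪ Ioc i n := by
      ext x; simp only [mem_Icc, mem_Ioc, mem_union]; omega
    rw [hu, Finset.sum_union (by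
        simp only [Finset.disjoint_left, Finset.mem_Icc, Finset.mem_Ioc]
        omega)]
    congr 1
    rw [← Finset.Ico_add_one_right_eq_Icc, Finset.sum_Ico_succ_top hi.1]
  have swap : ∑ i ∈ Icc 1 n, ∑ j ∈ Ico 1 i, f i j
      = ∑ i ∈ Icc 1 n, ∑ j ∈ Ioc i n, f i j := by
    have e1 : Icc 1 n = Ico 1 (n + 1) := by rw [Finset.Ico_add_one_right_eq_Icc]
    have e2 : ∀ i, Ioc i n = Ico (i + 1) (n + 1) := by
      intro i; ext x; simp only [mem_Ioc, mem_Ico]; omega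
    calc ∑ i ∈ Icc 1 n, ∑ j ∈ Ico 1 i, f i j
        = ∑ j ∈ Ico 1 (n+1), ∑ i ∈ Ico 1 j, f j i := by rw [e1]
      _ = ∑ i ∈ Ico 1 (n+1), ∑ j ∈ Ico (i+1) (n+1), f j i := by
          rw [Finset.sum_Ico_Ico_comm']
      _ = ∑ i ∈ Icc 1 n, ∑ j ∈ Ioc i n, f j i := by
          rw [e1]; exact Finset.sum_congr rfl fun i _ => by rw [e2]
      _ = ∑ i ∈ Icc 1 n, ∑ j ∈ Ioc i n, f i j := by
          refine Finset.sum_congr rfl fun i hi => Finset.sum_congr rfl fun j hj => ?_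
          have hj' : j ∈ Icc 1 n := by
            simp only [mem_Icc] at hi ⊢; simp only [mem_Ioc] at hj; omega
          exact (hfsymm i hi j hj').symm
  have stepB : ∑ i ∈ Icc 1 n, ∑ j ∈ Icc 1 n, f i j
      = (∑ i ∈ Icc 1 n, f i i) + 2 * ∑ i ∈ Icc 1 n, ∑ j ∈ Ioc i n, f i j := by
    rw [Finset.sum_congr rfl split, Finset.sum_add_distrib, Finset.sum_add_distrib, swap]
    ring
  -- diagonal values
  have hdiag : ∀ i, f i i = B i i * (1 - p2) - 2 * (B i i * (p (c i) - p2)) := by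
    intro i; simp only [hf, hhbar]; simp; ring
  have hDsum : ∑ i ∈ Icc 1 n, f i i
      = (1 - p2) * (∑ i ∈ Icc 1 n, B i i) - 2 * ∑ i ∈ Icc 1 n, B i i * (p (c i) - p2) := by
    simp only [hdiag]
    rw [Finset.sum_sub_distrib, ← Finset.sum_mul, ← Finset.mul_sum]
    ring
  rw [hQ, stepA]
  show (1 / (2 * (m:ℝ))) * ∑ i ∈ Icc 1 n, ∑ j ∈ Icc 1 n, f i j = _
  rw [stepB, hDsum]
  have hm0' : (m : ℝ) ≠ 0 := by positivity
  field_simp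
  ring
end

section
/- Let z_{n1} = 0 and z_{nj} = Σ_{i=1}^{j−1} A_{ij} h̄(c_i, c_j) for 2 ≤ j ≤ n, and let F_j = σ(c_1,…,c_j). Then (z_{nj})_{1≤j≤n} is a martingale difference array with respect to (F_j), and Σ_{j=1}^n E[ E( z_{nj}² | F_{j−1} ) ] = m ( p_{(2)} + p_{(2)}² − 2 p_{(3)} ); equivalently, E V_n² = 1, where V_n² = (1/(m² δ_n²)) Σ_{j=1}^n E( z_{nj}² | F_{j−1} ) and δ_n² = ( p_{(2)} + p_{(2)}² − 2 p_{(3)} )/m, provided p_{(2)} + p_{(2)}² − 2 p_{(3)} > 0. -/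
open MeasureTheory ProbabilityTheory Finset

/-- The increments `z_{nj}` form a martingale difference array and the conditional
variance process has unit mean. -/
theorem martingale_difference_and_mean_one
    {Ω : Type*} [MeasureSpace Ω] [IsProbabilityMeasure (ℙ : Measure Ω)]
    (n : ℕ) (A : ℕ → ℕ → ℝ) (m : ℕ) (k : ℕ → ℝ)
    (hA01 : ∀ i ∈ Icc 1 n, ∀ j ∈ Icc 1 n, A i j = 0 ∨ A i j = 1)
    (hAsymm : ∀ i ∈ Icc 1 n, ∀ j ∈ Icc 1 n, A i j = A j i)
    (hAdiag : ∀ i ∈ Icc 1 n, A i i = 0)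
    (hm : 1 ≤ m)
    (hk : ∀ i ∈ Icc 1 n, k i = ∑ j ∈ Icc 1 n, A i j)
    (hksum : ∑ i ∈ Icc 1 n, k i = 2 * (m : ℝ))
    (K : ℕ) (hK : 1 ≤ K) (p : ℕ → ℝ)
    (hp0 : ∀ j ∈ Icc 1 K, 0 ≤ p j) (hp1 : ∑ j ∈ Icc 1 K, p j = 1)
    (p2 p3 : ℝ)
    (hp2 : p2 = ∑ j ∈ Icc 1 K, (p j) ^ 2) (hp3 : p3 = ∑ j ∈ Icc 1 K, (p j) ^ 3)
    (hpos : 0 < p2 + p2 ^ 2 - 2 * p3)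
    (c : ℕ → Ω → ℕ)
    (hcmeas : ∀ i, Measurable (c i))
    (hcrange : ∀ i ω, c i ω ∈ Icc 1 K)
    (hcindep : iIndepFun c ℙ)
    (hcdist : ∀ i, ∀ j ∈ Icc 1 K, (ℙ {ω | c i ω = j}) = ENNReal.ofReal (p j))
    (hbar : ℕ → ℕ → ℝ)
    (hhbar : ∀ x y, hbar x y = (if x = y then (1 : ℝ) else 0) - p x - p y + p2)
    -- the martingale increments
    (z : ℕ → Ω → ℝ)
    (hz : ∀ j ω, z j ω = ∑ i ∈ Icc 1 (j - 1), A i j * hbar (c i ω) (c j ω))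
    -- the natural filtration `F_j = σ(c_1, …, c_j)`
    (F : ℕ → MeasurableSpace Ω)
    (hF : ∀ j, F j = ⨆ i ∈ Icc 1 j, MeasurableSpace.comap (c i) inferInstance)
    -- the normalized conditional variance process
    (δsq : ℝ) (hδsq : δsq = (p2 + p2 ^ 2 - 2 * p3) / (m : ℝ))
    (V : Ω → ℝ)
    (hV : ∀ ω, V ω = (1 / ((m : ℝ) ^ 2 * δsq)) *
      ∑ j ∈ Icc 1 n, (ℙ[(fun ω' => (z j ω') ^ 2) | F (j - 1)]) ω) :
    (∀ j ∈ Icc 1 n, Integrable (z j) ℙ ∧ ℙ[z j | F (j - 1)] =ᵐ[ℙ] 0)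
    ∧ (∑ j ∈ Icc 1 n, ∫ ω, (ℙ[(fun ω' => (z j ω') ^ 2) | F (j - 1)]) ω ∂ℙ
        = (m : ℝ) * (p2 + p2 ^ 2 - 2 * p3))
    ∧ ∫ ω, V ω ∂ℙ = 1 := by
  classical
  ------------------------------------------------------------------
  -- PURE ALGEBRA
  ------------------------------------------------------------------
  -- ∑_y p_y h̄(x,y) = 0
  have hA0 : ∀ x ∈ Icc 1 K, ∑ y ∈ Icc 1 K, p y * hbar x y = 0 := by
    intro x hx
    have hpt : ∀ y, p y * hbar x y
        = (if x = y then p y else 0) + (p y * (p2 - p x) - p y ^ 2) := by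
      intro y; rw [hhbar]; by_cases h : x = y <;> simp [h] <;> ring
    rw [Finset.sum_congr rfl fun y _ => hpt y, Finset.sum_add_distrib,
      Finset.sum_ite_eq _ x _, if_pos hx, Finset.sum_sub_distrib, ← Finset.sum_mul, hp1, ← hp2]
    ring
  have hsymm : ∀ x y, hbar x y = hbar y x := by
    intro x y; rw [hhbar, hhbar]
    by_cases h : x = y
    · subst h; ring
    · rw [if_neg h, if_neg fun hyx => h hyx.symm]; ring
  have hA0sym : ∀ y ∈ Icc 1 K, ∑ x ∈ Icc 1 K, p x * hbar x y = 0 := by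
    intro y hy
    rw [Finset.sum_congr rfl fun x _ => by rw [hsymm x y]]
    exact hA0 y hy
  -- ∑_{x,y} p_x p_y h̄(x,y)² = p₂ + p₂² − 2 p₃
  have hB : ∑ x ∈ Icc 1 K, ∑ y ∈ Icc 1 K, p x * p y * hbar x y ^ 2
      = p2 + p2 ^ 2 - 2 * p3 := by
    have hinner : ∀ x ∈ Icc 1 K, ∑ y ∈ Icc 1 K, p y * hbar x y ^ 2
        = p x + 2 * p2 * p x - 3 * p x ^ 2 - p2 ^ 2 + p3 := by
      intro x hx
      have hpt : ∀ y, p y * hbar x y ^ 2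
          = (if x = y then p y * (1 + 2 * (p2 - p x - p y)) else 0)
            + (p y * (p2 - p x) ^ 2 - 2 * (p2 - p x) * p y ^ 2 + p y ^ 3) := by
        intro y; rw [hhbar]; by_cases h : x = y <;> simp [h] <;> ring
      rw [Finset.sum_congr rfl fun y _ => hpt y, Finset.sum_add_distrib,
        Finset.sum_ite_eq _ x _, if_pos hx]
      rw [Finset.sum_add_distrib, Finset.sum_sub_distrib, ← Finset.sum_mul, hp1,
        ← Finset.mul_sum, ← hp2, ← hp3]
      ring
    have h1 : ∀ x ∈ Icc 1 K, ∑ y ∈ Icc 1 K, p x * p y * hbar x y ^ 2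
        = p x * (p x + 2 * p2 * p x - 3 * p x ^ 2 - p2 ^ 2 + p3) := by
      intro x hx
      rw [← hinner x hx, Finset.mul_sum]
      exact Finset.sum_congr rfl fun y _ => by ring
    rw [Finset.sum_congr rfl h1]
    have expand : ∀ x : ℕ, p x * (p x + 2 * p2 * p x - 3 * p x ^ 2 - p2 ^ 2 + p3)
        = p x ^ 2 + 2 * p2 * p x ^ 2 - 3 * p x ^ 3 - p2 ^ 2 * p x + p3 * p x := fun x => by ring
    rw [Finset.sum_congr rfl fun x _ => expand x]
    rw [Finset.sum_add_distrib, Finset.sum_sub_distrib, Finset.sum_sub_distrib,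
      Finset.sum_add_distrib, ← Finset.mul_sum, ← Finset.mul_sum, ← Finset.mul_sum,
      ← Finset.mul_sum, hp1, ← hp2, ← hp3]
    ring
  -- the triangular sum of the adjacency matrix is m
  have htri : ∑ j ∈ Icc 1 n, ∑ i ∈ Icc 1 (j - 1), A i j = (m : ℝ) := by
    have hfull : ∑ j ∈ Icc 1 n, ∑ i ∈ Icc 1 n, A i j = 2 * (m : ℝ) := by
      rw [Finset.sum_comm, ← hksum]
      exact Finset.sum_congr rfl fun i hi => (hk i hi).symm
    set T : ℝ := ∑ j ∈ Icc 1 n, ∑ i ∈ Icc 1 n, (if i < j then A i j else 0) with hT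
    have hlow : ∑ j ∈ Icc 1 n, ∑ i ∈ Icc 1 (j - 1), A i j = T := by
      refine Finset.sum_congr rfl fun j hj => ?_
      have hsub : Icc 1 (j - 1) = (Icc 1 n).filter (fun i => i < j) := by
        ext i
        simp only [Finset.mem_Icc, Finset.mem_filter]
        simp only [Finset.mem_Icc] at hj
        omega
      rw [hsub, Finset.sum_filter]
    have hup : ∑ j ∈ Icc 1 n, ∑ i ∈ Icc 1 n, (if j < i then A i j else 0) = T := by
      rw [Finset.sum_comm]
      refine Finset.sum_congr rfl fun i hi => Finset.sum_congr rfl fun j hj => ?_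
      by_cases h : j < i
      · rw [if_pos h, if_pos h, hAsymm i hi j hj]
      · rw [if_neg h, if_neg h]
    have hsplit : ∀ i ∈ Icc 1 n, ∀ j ∈ Icc 1 n,
        A i j = (if i < j then A i j else 0) + (if j < i then A i j else 0) := by
      intro i hi j hj
      rcases lt_trichotomy i j with h | h | h
      · simp [h, not_lt_of_gt h]
      · subst h; simp [hAdiag i hi]
      · simp [h, not_lt_of_gt h, lt_asymm h]
    have hTT : ∑ j ∈ Icc 1 n, ∑ i ∈ Icc 1 n, A i j = T + T := by
      calc ∑ j ∈ Icc 1 n, ∑ i ∈ Icc 1 n, A i j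
          = ∑ j ∈ Icc 1 n, ∑ i ∈ Icc 1 n,
              ((if i < j then A i j else 0) + (if j < i then A i j else 0)) :=
            Finset.sum_congr rfl fun j hj => Finset.sum_congr rfl fun i hi => hsplit i hi j hj
        _ = (∑ j ∈ Icc 1 n, ∑ i ∈ Icc 1 n, (if i < j then A i j else 0))
              + ∑ j ∈ Icc 1 n, ∑ i ∈ Icc 1 n, (if j < i then A i j else 0) := by
            rw [← Finset.sum_add_distrib]
            exact Finset.sum_congr rfl fun j _ => Finset.sum_add_distrib
        _ = T + T := by rw [hup]
    rw [hlow]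
    rw [hTT] at hfull
    linarith
  ------------------------------------------------------------------
  -- MEASURE-THEORETIC INFRASTRUCTURE
  ------------------------------------------------------------------
  have hFle : ∀ j, F j ≤ (inferInstance : MeasurableSpace Ω) := by
    intro j; rw [hF]
    exact iSup₂_le fun i _ => (hcmeas i).comap_le
  have hSF : ∀ j, SigmaFinite ((ℙ : Measure Ω).trim (hFle j)) := fun j => inferInstance
  have hcFmeas : ∀ j, ∀ i ∈ Icc 1 j, Measurable[F j] (c i) := by
    intro j i hi
    rw [measurable_iff_comap_le, hF]
    exact le_biSup (fun i => MeasurableSpace.comap (c i) inferInstance) hi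
  have hIndep : ∀ j : ℕ, 1 ≤ j →
      Indep (MeasurableSpace.comap (c j) inferInstance) (F (j - 1)) ℙ := by
    intro j hj
    have hd : Disjoint ({j} : Set ℕ) (↑(Icc 1 (j - 1)) : Set ℕ) := by
      simp only [Set.disjoint_singleton_left, Finset.coe_Icc, Set.mem_Icc]
      omega
    have h := ProbabilityTheory.indep_iSup_of_disjoint
      (fun i => (hcmeas i).comap_le) hcindep.iIndep hd
    have h1 : (⨆ i ∈ ({j} : Set ℕ), MeasurableSpace.comap (c i) inferInstance)
        = MeasurableSpace.comap (c j) inferInstance := by simp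
    have h2 : (⨆ i ∈ (↑(Icc 1 (j - 1)) : Set ℕ), MeasurableSpace.comap (c i) inferInstance)
        = F (j - 1) := by
      rw [hF]; simp
    rwa [h1, h2] at h
  have hExpInd : ∀ i : ℕ, ∀ y ∈ Icc 1 K,
      ∫ ω, (if c i ω = y then (1 : ℝ) else 0) ∂ℙ = p y := by
    intro i y hy
    have hmeas : MeasurableSet (c i ⁻¹' {y}) := (hcmeas i) (measurableSet_singleton y)
    have hrw : (fun ω => if c i ω = y then (1 : ℝ) else 0)
        = Set.indicator (c i ⁻¹' {y}) (fun _ => (1 : ℝ)) := by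
      ext ω; by_cases h : c i ω = y <;> simp [Set.indicator, h]
    rw [hrw, integral_indicator_const _ hmeas]
    have hpre : c i ⁻¹' {y} = {ω | c i ω = y} := rfl
    rw [hpre, measureReal_def, hcdist i y hy, smul_eq_mul, mul_one, ENNReal.toReal_ofReal (hp0 y hy)]
  -- bounded measurable functions are integrable
  have hint : ∀ (f : Ω → ℝ), Measurable f → ∀ C : ℝ, (∀ ω, |f ω| ≤ C) → Integrable f ℙ := by
    intro f hf C hC
    exact (integrable_const C).mono' hf.aestronglyMeasurable
      (Filter.Eventually.of_forall fun ω => by simpa [Real.norm_eq_abs] using hC ω)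
  set M : ℝ := ∑ x ∈ Icc 1 K, ∑ y ∈ Icc 1 K, |hbar x y| with hM
  have hMb : ∀ x ∈ Icc 1 K, ∀ y ∈ Icc 1 K, |hbar x y| ≤ M := by
    intro x hx y hy
    calc |hbar x y| ≤ ∑ y' ∈ Icc 1 K, |hbar x y'| :=
          Finset.single_le_sum (f := fun y' => |hbar x y'|) (fun _ _ => abs_nonneg _) hy
      _ ≤ M := Finset.single_le_sum (f := fun x' => ∑ y' ∈ Icc 1 K, |hbar x' y'|)
          (fun _ _ => Finset.sum_nonneg fun _ _ => abs_nonneg _) hx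
  have hMpos : 0 ≤ M := Finset.sum_nonneg fun _ _ => Finset.sum_nonneg fun _ _ => abs_nonneg _
  have hbarmeas : ∀ i j : ℕ, Measurable (fun ω => hbar (c i ω) (c j ω)) := by
    intro i j
    exact (measurable_of_countable (fun q : ℕ × ℕ => hbar q.1 q.2)).comp
      ((hcmeas i).prodMk (hcmeas j))
  have hbarbd : ∀ i j ω, |hbar (c i ω) (c j ω)| ≤ M :=
    fun i j ω => hMb _ (hcrange i ω) _ (hcrange j ω)
  have hintf : ∀ i j : ℕ, Integrable (fun ω => hbar (c i ω) (c j ω)) ℙ :=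
    fun i j => hint _ (hbarmeas i j) M (hbarbd i j)
  have hzmeas : ∀ j, Measurable (z j) := by
    intro j
    have : z j = fun ω => ∑ i ∈ Icc 1 (j - 1), A i j * hbar (c i ω) (c j ω) := funext (hz j)
    rw [this]
    exact Finset.measurable_sum _ fun i _ => measurable_const.mul (hbarmeas i j)
  have hzbd : ∀ j ω, |z j ω| ≤ ∑ i ∈ Icc 1 (j - 1), |A i j| * M := by
    intro j ω
    rw [hz]
    calc |∑ i ∈ Icc 1 (j - 1), A i j * hbar (c i ω) (c j ω)|
        ≤ ∑ i ∈ Icc 1 (j - 1), |A i j * hbar (c i ω) (c j ω)| := Finset.abs_sum_le_sum_abs _ _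
      _ ≤ ∑ i ∈ Icc 1 (j - 1), |A i j| * M := by
          refine Finset.sum_le_sum fun i _ => ?_
          rw [abs_mul]
          exact mul_le_mul_of_nonneg_left (hbarbd i j ω) (abs_nonneg _)
  have hzint : ∀ j, Integrable (z j) ℙ :=
    fun j => hint _ (hzmeas j) _ (hzbd j)
  have hzsqint : ∀ j, Integrable (fun ω => z j ω ^ 2) ℙ := by
    intro j
    refine hint _ ((hzmeas j).pow_const 2) ((∑ i ∈ Icc 1 (j - 1), |A i j| * M) ^ 2) fun ω => ?_
    rw [abs_pow]
    exact pow_le_pow_left₀ (abs_nonneg _) (hzbd j ω) 2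
  ------------------------------------------------------------------
  -- ae-equality of finite sums
  ------------------------------------------------------------------
  have aesum : ∀ (s : Finset ℕ) (f g : ℕ → Ω → ℝ), (∀ i ∈ s, f i =ᵐ[ℙ] g i) →
      (∑ i ∈ s, f i) =ᵐ[ℙ] (∑ i ∈ s, g i) := by
    intro s f g h
    have h' : ∀ᵐ ω ∂ℙ, ∀ i ∈ s, f i ω = g i ω :=
      (Filter.eventually_all_finset s).2 h
    filter_upwards [h'] with ω hω
    rw [Finset.sum_apply, Finset.sum_apply]
    exact Finset.sum_congr rfl hω
  ------------------------------------------------------------------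
  -- PART 1 : martingale differences
  ------------------------------------------------------------------
  have key : ∀ j : ℕ, 1 ≤ j → ∀ i ∈ Icc 1 (j - 1), ∀ y ∈ Icc 1 K,
      ℙ[(fun ω => hbar (c i ω) y) * (fun ω => if c j ω = y then (1 : ℝ) else 0) | F (j - 1)]
        =ᵐ[ℙ] fun ω => hbar (c i ω) y * p y := by
    intro j hj i hi y hy
    set g : Ω → ℝ := fun ω => hbar (c i ω) y with hg
    set X : Ω → ℝ := fun ω => if c j ω = y then (1 : ℝ) else 0 with hX
    have hgmeas : Measurable g := (measurable_of_countable (fun t => hbar t y)).comp (hcmeas i)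
    have hgFmeas : StronglyMeasurable[F (j - 1)] g :=
      ((measurable_of_countable (fun t => hbar t y)).comp
        (hcFmeas (j - 1) i hi)).stronglyMeasurable
    have hgbd : ∀ ω, |g ω| ≤ M := fun ω => hMb _ (hcrange i ω) y hy
    have hXmeas : Measurable X :=
      (measurable_of_countable (fun t => if t = y then (1 : ℝ) else 0)).comp (hcmeas j)
    have hXbd : ∀ ω, |X ω| ≤ 1 := by
      intro ω; by_cases h : c j ω = y <;> simp [hX, h]
    have hXint : Integrable X ℙ := hint X hXmeas 1 hXbd
    have hgXint : Integrable (g * X) ℙ := by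
      refine hint _ (hgmeas.mul hXmeas) (M * 1) fun ω => ?_
      rw [Pi.mul_apply, abs_mul]
      exact mul_le_mul (hgbd ω) (hXbd ω) (abs_nonneg _) (le_trans (abs_nonneg _) (hgbd ω))
    haveI := hSF (j - 1)
    have hmul := condExp_mul_of_stronglyMeasurable_left hgFmeas hgXint hXint
    have hXcond : ℙ[X | F (j - 1)] =ᵐ[ℙ] fun _ => p y := by
      have hXm1 : StronglyMeasurable[MeasurableSpace.comap (c j) inferInstance] X := by
        refine Measurable.stronglyMeasurable ?_
        exact (measurable_of_countable (fun t => if t = y then (1 : ℝ) else 0)).comp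
          (Measurable.of_comap_le le_rfl)
      have h := condExp_indep_eq (μ := ℙ) ((hcmeas j).comap_le) (hFle (j - 1))
        hXm1 (hIndep j hj)
      rw [show ∫ ω, X ω ∂ℙ = p y from hExpInd j y hy] at h
      exact h
    refine hmul.trans ?_
    filter_upwards [hXcond] with ω hω
    simp only [Pi.mul_apply, hω, hg]
  -- conditional expectation of each basic term vanishes
  have hfcond : ∀ j : ℕ, 1 ≤ j → ∀ i ∈ Icc 1 (j - 1),
      ℙ[(fun ω => hbar (c i ω) (c j ω)) | F (j - 1)] =ᵐ[ℙ] 0 := by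
    intro j hj i hi
    haveI := hSF (j - 1)
    have hdecomp : (fun ω => hbar (c i ω) (c j ω))
        = ∑ y ∈ Icc 1 K,
            ((fun ω => hbar (c i ω) y) * fun ω => if c j ω = y then (1 : ℝ) else 0) := by
      funext ω
      rw [Finset.sum_apply]
      have hterm : ∀ y, ((fun ω => hbar (c i ω) y) * fun ω =>
          if c j ω = y then (1 : ℝ) else 0) ω = if c j ω = y then hbar (c i ω) y else 0 := by
        intro y; by_cases h : c j ω = y <;> simp [h]
      rw [Finset.sum_congr rfl fun y _ => hterm y,
        Finset.sum_ite_eq (Icc 1 K) (c j ω) (fun y => hbar (c i ω) y), if_pos (hcrange j ω)]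
    have hterm_int : ∀ y ∈ Icc 1 K, Integrable
        ((fun ω => hbar (c i ω) y) * fun ω => if c j ω = y then (1 : ℝ) else 0) ℙ := by
      intro y hy
      refine hint _ (((measurable_of_countable (fun t => hbar t y)).comp
        (hcmeas i)).mul ((measurable_of_countable
          (fun t => if t = y then (1 : ℝ) else 0)).comp (hcmeas j))) (M * 1) fun ω => ?_
      rw [Pi.mul_apply, abs_mul]
      have h1 : |hbar (c i ω) y| ≤ M := hMb _ (hcrange i ω) y hy
      have h2 : |if c j ω = y then (1 : ℝ) else 0| ≤ 1 := by
        by_cases h : c j ω = y <;> simp [h]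
      exact mul_le_mul h1 h2 (abs_nonneg _) (le_trans (abs_nonneg _) h1)
    calc ℙ[(fun ω => hbar (c i ω) (c j ω)) | F (j - 1)]
        =ᵐ[ℙ] ∑ y ∈ Icc 1 K, ℙ[((fun ω => hbar (c i ω) y) * fun ω =>
            if c j ω = y then (1 : ℝ) else 0) | F (j - 1)] := by
          rw [hdecomp]; exact condExp_finsetSum hterm_int _
      _ =ᵐ[ℙ] ∑ y ∈ Icc 1 K, (fun ω => hbar (c i ω) y * p y) :=
          aesum _ _ _ fun y hy => key j hj i hi y hy
      _ =ᵐ[ℙ] 0 := by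
          refine Filter.EventuallyEq.of_eq ?_
          funext ω
          rw [Finset.sum_apply]
          have : ∀ y ∈ Icc 1 K, hbar (c i ω) y * p y = p y * hbar (c i ω) y :=
            fun y _ => mul_comm _ _
          rw [Finset.sum_congr rfl this, hA0 _ (hcrange i ω)]
          rfl
  have part1 : ∀ j ∈ Icc 1 n, Integrable (z j) ℙ ∧ ℙ[z j | F (j - 1)] =ᵐ[ℙ] 0 := by
    intro j hj
    refine ⟨hzint j, ?_⟩
    have hj1 : 1 ≤ j := (Finset.mem_Icc.mp hj).1
    haveI := hSF (j - 1)
    have hzdecomp : z j = ∑ i ∈ Icc 1 (j - 1), (A i j) • (fun ω => hbar (c i ω) (c j ω)) := by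
      funext ω
      rw [hz, Finset.sum_apply]
      exact Finset.sum_congr rfl fun i _ => rfl
    calc ℙ[z j | F (j - 1)]
        =ᵐ[ℙ] ∑ i ∈ Icc 1 (j - 1),
            ℙ[(A i j) • (fun ω => hbar (c i ω) (c j ω)) | F (j - 1)] := by
          rw [hzdecomp]
          exact condExp_finsetSum (fun i _ => (hintf i j).smul (A i j)) _
      _ =ᵐ[ℙ] ∑ i ∈ Icc 1 (j - 1), (0 : Ω → ℝ) := by
          refine aesum _ _ _ fun i hi => ?_
          refine (condExp_smul (A i j) _ _).trans ?_
          filter_upwards [hfcond j hj1 i hi] with ω hω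
          simp [hω]
      _ =ᵐ[ℙ] 0 := by rw [Finset.sum_const_zero]
  ------------------------------------------------------------------
  -- PART 2 : expectations of pairs and triples
  ------------------------------------------------------------------
  have hpre : ∀ (i x : ℕ), c i ⁻¹' {x} = {ω | c i ω = x} := fun i x => rfl
  have hmeaspre : ∀ (i x : ℕ), MeasurableSet (c i ⁻¹' {x}) :=
    fun i x => (hcmeas i) (measurableSet_singleton x)
  have hE2 : ∀ i j : ℕ, i ≠ j → ∀ φ : ℕ → ℕ → ℝ,
      ∫ ω, φ (c i ω) (c j ω) ∂ℙ
        = ∑ x ∈ Icc 1 K, ∑ y ∈ Icc 1 K, (p x * p y) * φ x y := by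
    intro i j hij φ
    have hP2 : ∀ x y : ℕ, x ∈ Icc 1 K → y ∈ Icc 1 K →
        (ℙ (c i ⁻¹' {x} ∩ c j ⁻¹' {y})).toReal = p x * p y := by
      intro x y hx hy
      rw [(indepFun_iff_measure_inter_preimage_eq_mul.mp (hcindep.indepFun hij)) {x} {y}
        (measurableSet_singleton x) (measurableSet_singleton y)]
      rw [hpre, hpre, hcdist i x hx, hcdist j y hy, ENNReal.toReal_mul,
        ENNReal.toReal_ofReal (hp0 x hx), ENNReal.toReal_ofReal (hp0 y hy)]
    have hptw : ∀ ω, φ (c i ω) (c j ω)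
        = ∑ x ∈ Icc 1 K, ∑ y ∈ Icc 1 K,
            Set.indicator (c i ⁻¹' {x} ∩ c j ⁻¹' {y}) (fun _ => φ x y) ω := by
      intro ω
      have h1 : ∀ x y : ℕ, Set.indicator (c i ⁻¹' {x} ∩ c j ⁻¹' {y}) (fun _ => φ x y) ω
          = if c i ω = x then (if c j ω = y then φ x y else 0) else 0 := by
        intro x y
        by_cases h1 : c i ω = x <;> by_cases h2 : c j ω = y <;>
          simp [Set.indicator, hpre, h1, h2]
      have h2 : ∀ x : ℕ, ∑ y ∈ Icc 1 K,
          (if c i ω = x then (if c j ω = y then φ x y else 0) else 0)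
          = if c i ω = x then φ x (c j ω) else 0 := by
        intro x
        by_cases hx : c i ω = x
        · simp only [if_pos hx]
          rw [Finset.sum_ite_eq (Icc 1 K) (c j ω) (φ x), if_pos (hcrange j ω)]
        · simp [hx]
      simp only [h1, h2]
      rw [Finset.sum_ite_eq (Icc 1 K) (c i ω), if_pos (hcrange i ω)]
    have hind_int : ∀ x y : ℕ,
        Integrable (Set.indicator (c i ⁻¹' {x} ∩ c j ⁻¹' {y}) (fun _ => φ x y)) ℙ :=
      fun x y => (integrable_const (φ x y)).indicator ((hmeaspre i x).inter (hmeaspre j y))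
    calc ∫ ω, φ (c i ω) (c j ω) ∂ℙ
        = ∫ ω, ∑ x ∈ Icc 1 K, ∑ y ∈ Icc 1 K,
            Set.indicator (c i ⁻¹' {x} ∩ c j ⁻¹' {y}) (fun _ => φ x y) ω ∂ℙ :=
          integral_congr_ae (Filter.Eventually.of_forall fun ω => hptw ω)
      _ = ∑ x ∈ Icc 1 K, ∑ y ∈ Icc 1 K, (p x * p y) * φ x y := by
          rw [integral_finset_sum _ fun x _ => integrable_finset_sum _ fun y _ => hind_int x y]
          refine Finset.sum_congr rfl fun x hx => ?_
          rw [integral_finset_sum _ fun y _ => hind_int x y]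
          refine Finset.sum_congr rfl fun y hy => ?_
          rw [integral_indicator_const _ ((hmeaspre i x).inter (hmeaspre j y)),
            smul_eq_mul, measureReal_def, hP2 x y hx hy]
  have hE3 : ∀ i1 i2 j : ℕ, i1 ≠ i2 → i1 ≠ j → i2 ≠ j → ∀ φ : ℕ → ℕ → ℕ → ℝ,
      ∫ ω, φ (c i1 ω) (c i2 ω) (c j ω) ∂ℙ
        = ∑ x ∈ Icc 1 K, ∑ x' ∈ Icc 1 K, ∑ y ∈ Icc 1 K, (p x * p x' * p y) * φ x x' y := by
    intro i1 i2 j h12 h1j h2j φ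
    have hP3 : ∀ x x' y : ℕ, x ∈ Icc 1 K → x' ∈ Icc 1 K → y ∈ Icc 1 K →
        (ℙ (c i1 ⁻¹' {x} ∩ (c i2 ⁻¹' {x'} ∩ c j ⁻¹' {y}))).toReal = p x * p x' * p y := by
      intro x x' y hx hx' hy
      set s : ℕ → Set Ω := fun l =>
        if l = i1 then c i1 ⁻¹' {x} else if l = i2 then c i2 ⁻¹' {x'} else c j ⁻¹' {y}
        with hs_def
      have hmem : ∀ l ∈ ({i1, i2, j} : Finset ℕ),
          MeasurableSet[(inferInstance : MeasurableSpace ℕ).comap (c l)] (s l) := by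
        intro l hl
        simp only [Finset.mem_insert, Finset.mem_singleton] at hl
        rcases hl with rfl | rfl | rfl
        · simp only [hs_def, if_pos rfl]; exact ⟨{x}, trivial, rfl⟩
        · simp only [hs_def, if_neg h12.symm, if_pos rfl]; exact ⟨{x'}, trivial, rfl⟩
        · simp only [hs_def, if_neg h1j.symm, if_neg h2j.symm]; exact ⟨{y}, trivial, rfl⟩
      have hbi := hcindep.meas_biInter (S := {i1, i2, j}) hmem
      have hInt : (⋂ l ∈ ({i1, i2, j} : Finset ℕ), s l)
          = c i1 ⁻¹' {x} ∩ (c i2 ⁻¹' {x'} ∩ c j ⁻¹' {y}) := by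
        rw [Finset.set_biInter_insert, Finset.set_biInter_insert, Finset.set_biInter_singleton]
        simp only [hs_def, if_pos rfl, if_neg h12.symm, if_neg h1j.symm, if_neg h2j.symm]
        simp
      have hprod : ∏ l ∈ ({i1, i2, j} : Finset ℕ), ℙ (s l)
          = ℙ (c i1 ⁻¹' {x}) * (ℙ (c i2 ⁻¹' {x'}) * ℙ (c j ⁻¹' {y})) := by
        rw [Finset.prod_insert (by simp [h12, h1j]), Finset.prod_insert (by simp [h2j]),
          Finset.prod_singleton]
        simp only [hs_def, if_pos rfl, if_neg h12.symm, if_neg h1j.symm, if_neg h2j.symm]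
        simp
      rw [hInt] at hbi
      rw [hbi, hprod, hpre, hpre, hpre, hcdist i1 x hx, hcdist i2 x' hx', hcdist j y hy,
        ENNReal.toReal_mul, ENNReal.toReal_mul,
        ENNReal.toReal_ofReal (hp0 x hx), ENNReal.toReal_ofReal (hp0 x' hx'),
        ENNReal.toReal_ofReal (hp0 y hy)]
      ring
    have hptw : ∀ ω, φ (c i1 ω) (c i2 ω) (c j ω)
        = ∑ x ∈ Icc 1 K, ∑ x' ∈ Icc 1 K, ∑ y ∈ Icc 1 K,
            Set.indicator (c i1 ⁻¹' {x} ∩ (c i2 ⁻¹' {x'} ∩ c j ⁻¹' {y}))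
              (fun _ => φ x x' y) ω := by
      intro ω
      have h1 : ∀ x x' y : ℕ,
          Set.indicator (c i1 ⁻¹' {x} ∩ (c i2 ⁻¹' {x'} ∩ c j ⁻¹' {y})) (fun _ => φ x x' y) ω
          = if c i1 ω = x then (if c i2 ω = x' then (if c j ω = y then φ x x' y else 0) else 0)
            else 0 := by
        intro x x' y
        by_cases h1 : c i1 ω = x <;> by_cases h2 : c i2 ω = x' <;> by_cases h3 : c j ω = y <;>
          simp [Set.indicator, h1, h2, h3]
      have h2 : ∀ x x' : ℕ, ∑ y ∈ Icc 1 K,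
          (if c i1 ω = x then (if c i2 ω = x' then (if c j ω = y then φ x x' y else 0) else 0)
            else 0)
          = if c i1 ω = x then (if c i2 ω = x' then φ x x' (c j ω) else 0) else 0 := by
        intro x x'
        by_cases hx : c i1 ω = x
        · by_cases hx' : c i2 ω = x'
          · simp only [if_pos hx, if_pos hx']
            rw [Finset.sum_ite_eq (Icc 1 K) (c j ω) (φ x x'), if_pos (hcrange j ω)]
          · simp [hx, hx']
        · simp [hx]
      have h3 : ∀ x : ℕ, ∑ x' ∈ Icc 1 K,
          (if c i1 ω = x then (if c i2 ω = x' then φ x x' (c j ω) else 0) else 0)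
          = if c i1 ω = x then φ x (c i2 ω) (c j ω) else 0 := by
        intro x
        by_cases hx : c i1 ω = x
        · simp only [if_pos hx]
          rw [Finset.sum_ite_eq (Icc 1 K) (c i2 ω) (fun x' => φ x x' (c j ω)),
            if_pos (hcrange i2 ω)]
        · simp [hx]
      simp only [h1, h2, h3]
      rw [Finset.sum_ite_eq (Icc 1 K) (c i1 ω), if_pos (hcrange i1 ω)]
    have hind_int : ∀ x x' y : ℕ,
        Integrable (Set.indicator (c i1 ⁻¹' {x} ∩ (c i2 ⁻¹' {x'} ∩ c j ⁻¹' {y}))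
          (fun _ => φ x x' y)) ℙ :=
      fun x x' y => (integrable_const (φ x x' y)).indicator
        ((hmeaspre i1 x).inter ((hmeaspre i2 x').inter (hmeaspre j y)))
    calc ∫ ω, φ (c i1 ω) (c i2 ω) (c j ω) ∂ℙ
        = ∫ ω, ∑ x ∈ Icc 1 K, ∑ x' ∈ Icc 1 K, ∑ y ∈ Icc 1 K,
            Set.indicator (c i1 ⁻¹' {x} ∩ (c i2 ⁻¹' {x'} ∩ c j ⁻¹' {y}))
              (fun _ => φ x x' y) ω ∂ℙ :=
          integral_congr_ae (Filter.Eventually.of_forall fun ω => hptw ω)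
      _ = ∑ x ∈ Icc 1 K, ∑ x' ∈ Icc 1 K, ∑ y ∈ Icc 1 K, (p x * p x' * p y) * φ x x' y := by
          rw [integral_finset_sum _ fun x _ => integrable_finset_sum _ fun x' _ =>
            integrable_finset_sum _ fun y _ => hind_int x x' y]
          refine Finset.sum_congr rfl fun x hx => ?_
          rw [integral_finset_sum _ fun x' _ => integrable_finset_sum _ fun y _ =>
            hind_int x x' y]
          refine Finset.sum_congr rfl fun x' hx' => ?_
          rw [integral_finset_sum _ fun y _ => hind_int x x' y]
          refine Finset.sum_congr rfl fun y hy => ?_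
          rw [integral_indicator_const _
            ((hmeaspre i1 x).inter ((hmeaspre i2 x').inter (hmeaspre j y))),
            smul_eq_mul, measureReal_def, hP3 x x' y hx hx' hy]
  -- the cross terms vanish
  have hcross : ∑ x ∈ Icc 1 K, ∑ x' ∈ Icc 1 K, ∑ y ∈ Icc 1 K,
      (p x * p x' * p y) * (hbar x y * hbar x' y) = 0 := by
    have hyzero : ∀ y ∈ Icc 1 K, ∑ x ∈ Icc 1 K, ∑ x' ∈ Icc 1 K,
        (p x * p x' * p y) * (hbar x y * hbar x' y) = 0 := by
      intro y hy
      have hfac : ∑ x ∈ Icc 1 K, ∑ x' ∈ Icc 1 K, (p x * p x' * p y) * (hbar x y * hbar x' y)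
          = p y * ((∑ x ∈ Icc 1 K, p x * hbar x y) * (∑ x' ∈ Icc 1 K, p x' * hbar x' y)) := by
        rw [Finset.sum_mul_sum, Finset.mul_sum]
        refine Finset.sum_congr rfl fun x _ => ?_
        rw [Finset.mul_sum]
        exact Finset.sum_congr rfl fun x' _ => by ring
      rw [hfac, hA0sym y hy, zero_mul, mul_zero]
    calc ∑ x ∈ Icc 1 K, ∑ x' ∈ Icc 1 K, ∑ y ∈ Icc 1 K,
          (p x * p x' * p y) * (hbar x y * hbar x' y)
        = ∑ x ∈ Icc 1 K, ∑ y ∈ Icc 1 K, ∑ x' ∈ Icc 1 K,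
            (p x * p x' * p y) * (hbar x y * hbar x' y) :=
          Finset.sum_congr rfl fun x _ => Finset.sum_comm
      _ = ∑ y ∈ Icc 1 K, ∑ x ∈ Icc 1 K, ∑ x' ∈ Icc 1 K,
            (p x * p x' * p y) * (hbar x y * hbar x' y) := Finset.sum_comm
      _ = 0 := by
          rw [Finset.sum_congr rfl fun y hy => hyzero y hy, Finset.sum_const_zero]
  -- the second moment of each increment
  have hzsq : ∀ j ∈ Icc 1 n,
      ∫ ω, z j ω ^ 2 ∂ℙ = (∑ i ∈ Icc 1 (j - 1), A i j) * (p2 + p2 ^ 2 - 2 * p3) := by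
    intro j hj
    have hjn : 1 ≤ j ∧ j ≤ n := Finset.mem_Icc.mp hj
    have hiIcc : ∀ i ∈ Icc 1 (j - 1), i ∈ Icc 1 n := by
      intro i hi
      have := Finset.mem_Icc.mp hi
      exact Finset.mem_Icc.mpr ⟨this.1, by omega⟩
    have hinej : ∀ i ∈ Icc 1 (j - 1), i ≠ j := by
      intro i hi
      have := Finset.mem_Icc.mp hi
      omega
    have hsq : ∀ ω, z j ω ^ 2
        = ∑ i1 ∈ Icc 1 (j - 1), ∑ i2 ∈ Icc 1 (j - 1),
          (A i1 j * A i2 j) * (hbar (c i1 ω) (c j ω) * hbar (c i2 ω) (c j ω)) := by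
      intro ω
      rw [hz, sq, Finset.sum_mul_sum]
      exact Finset.sum_congr rfl fun i1 _ => Finset.sum_congr rfl fun i2 _ => by ring
    have hterm_int : ∀ i1 i2 : ℕ, Integrable (fun ω =>
        (A i1 j * A i2 j) * (hbar (c i1 ω) (c j ω) * hbar (c i2 ω) (c j ω))) ℙ := by
      intro i1 i2
      refine hint _ (measurable_const.mul ((hbarmeas i1 j).mul (hbarmeas i2 j)))
        (|A i1 j * A i2 j| * (M * M)) fun ω => ?_
      rw [abs_mul]
      refine mul_le_mul_of_nonneg_left ?_ (abs_nonneg _)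
      rw [abs_mul]
      exact mul_le_mul (hbarbd i1 j ω) (hbarbd i2 j ω) (abs_nonneg _) hMpos
    have hdiag : ∀ i1 ∈ Icc 1 (j - 1), ∀ i2 ∈ Icc 1 (j - 1),
        ∫ ω, (A i1 j * A i2 j) * (hbar (c i1 ω) (c j ω) * hbar (c i2 ω) (c j ω)) ∂ℙ
          = if i1 = i2 then A i1 j * (p2 + p2 ^ 2 - 2 * p3) else 0 := by
      intro i1 hi1 i2 hi2
      by_cases h : i1 = i2
      · subst h
        rw [if_pos rfl, integral_const_mul]
        rw [hE2 i1 j (hinej i1 hi1) (fun x y => hbar x y * hbar x y)]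
        have : ∑ x ∈ Icc 1 K, ∑ y ∈ Icc 1 K, (p x * p y) * (hbar x y * hbar x y)
            = p2 + p2 ^ 2 - 2 * p3 := by
          rw [← hB]
          exact Finset.sum_congr rfl fun x _ => Finset.sum_congr rfl fun y _ => by ring
        rw [this]
        rcases hA01 i1 (hiIcc i1 hi1) j (Finset.mem_Icc.mpr ⟨hjn.1, hjn.2⟩) with h0 | h1
        · rw [h0]; ring
        · rw [h1]; ring
      · rw [if_neg h, integral_const_mul]
        rw [hE3 i1 i2 j h (hinej i1 hi1) (hinej i2 hi2)
          (fun x x' y => hbar x y * hbar x' y), hcross, mul_zero]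
    calc ∫ ω, z j ω ^ 2 ∂ℙ
        = ∫ ω, ∑ i1 ∈ Icc 1 (j - 1), ∑ i2 ∈ Icc 1 (j - 1),
            (A i1 j * A i2 j) * (hbar (c i1 ω) (c j ω) * hbar (c i2 ω) (c j ω)) ∂ℙ :=
          integral_congr_ae (Filter.Eventually.of_forall fun ω => hsq ω)
      _ = ∑ i1 ∈ Icc 1 (j - 1), ∑ i2 ∈ Icc 1 (j - 1),
            ∫ ω, (A i1 j * A i2 j) * (hbar (c i1 ω) (c j ω) * hbar (c i2 ω) (c j ω)) ∂ℙ := by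
          rw [integral_finset_sum _ fun i1 _ =>
            integrable_finset_sum _ fun i2 _ => hterm_int i1 i2]
          exact Finset.sum_congr rfl fun i1 _ =>
            integral_finset_sum _ fun i2 _ => hterm_int i1 i2
      _ = ∑ i1 ∈ Icc 1 (j - 1), A i1 j * (p2 + p2 ^ 2 - 2 * p3) := by
          refine Finset.sum_congr rfl fun i1 hi1 => ?_
          rw [Finset.sum_congr rfl fun i2 hi2 => hdiag i1 hi1 i2 hi2,
            Finset.sum_ite_eq (Icc 1 (j - 1)) i1, if_pos hi1]
      _ = (∑ i ∈ Icc 1 (j - 1), A i j) * (p2 + p2 ^ 2 - 2 * p3) := by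
          rw [Finset.sum_mul]
  have part2 : ∑ j ∈ Icc 1 n, ∫ ω, (ℙ[(fun ω' => (z j ω') ^ 2) | F (j - 1)]) ω ∂ℙ
      = (m : ℝ) * (p2 + p2 ^ 2 - 2 * p3) := by
    have hcj : ∀ j ∈ Icc 1 n, ∫ ω, (ℙ[(fun ω' => (z j ω') ^ 2) | F (j - 1)]) ω ∂ℙ
        = (∑ i ∈ Icc 1 (j - 1), A i j) * (p2 + p2 ^ 2 - 2 * p3) := by
      intro j hj
      haveI := hSF (j - 1)
      rw [integral_condExp (hFle (j - 1))]
      exact hzsq j hj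
    rw [Finset.sum_congr rfl hcj, ← Finset.sum_mul, htri]
  ------------------------------------------------------------------
  -- PART 3 : unit mean
  ------------------------------------------------------------------
  have part3 : ∫ ω, V ω ∂ℙ = 1 := by
    have hVeq : ∫ ω, V ω ∂ℙ = (1 / ((m : ℝ) ^ 2 * δsq)) *
        ∑ j ∈ Icc 1 n, ∫ ω, (ℙ[(fun ω' => (z j ω') ^ 2) | F (j - 1)]) ω ∂ℙ := by
      calc ∫ ω, V ω ∂ℙ
          = ∫ ω, (1 / ((m : ℝ) ^ 2 * δsq)) *
              ∑ j ∈ Icc 1 n, (ℙ[(fun ω' => (z j ω') ^ 2) | F (j - 1)]) ω ∂ℙ :=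
            integral_congr_ae (Filter.Eventually.of_forall fun ω => hV ω)
        _ = (1 / ((m : ℝ) ^ 2 * δsq)) *
              ∫ ω, ∑ j ∈ Icc 1 n, (ℙ[(fun ω' => (z j ω') ^ 2) | F (j - 1)]) ω ∂ℙ := by
            rw [integral_const_mul]
        _ = (1 / ((m : ℝ) ^ 2 * δsq)) *
              ∑ j ∈ Icc 1 n, ∫ ω, (ℙ[(fun ω' => (z j ω') ^ 2) | F (j - 1)]) ω ∂ℙ := by
            rw [integral_finset_sum _ fun j _ => integrable_condExp]
    rw [hVeq, part2, hδsq]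
    have hmne : (m : ℝ) ≠ 0 := by
      have : (0 : ℝ) < m := by exact_mod_cast Nat.lt_of_lt_of_le Nat.zero_lt_one hm
      exact ne_of_gt this
    have hCne : p2 + p2 ^ 2 - 2 * p3 ≠ 0 := ne_of_gt hpos
    field_simp
    linear_combination mul_inv_cancel₀ hCne
  exact ⟨part1, part2, part3⟩
end

section
/- If max_{1≤i≤n} k_i / √m → 0 as n → ∞, then (1/(2m)) Σ_{1≤i≠j≤n} B_{ij}² → 1 and (1/m) Σ_{i=1}^n B_{ii}² → 0 as n → ∞. -/
open Finset Real

private lemma aux2 (n : ℕ) (m : ℕ) (k : ℕ → ℝ) (δ : ℝ) (hδ : 0 ≤ δ)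
    (hm : 1 ≤ m)
    (hknn : ∀ i ∈ Icc 1 n, 0 ≤ k i)
    (hksum : ∑ i ∈ Icc 1 n, k i = 2 * (m : ℝ))
    (hbd : ∀ i ∈ Icc 1 n, k i ≤ δ * Real.sqrt m) :
    |(1 / (m : ℝ)) * ∑ i ∈ Icc 1 n, (k i * k i / (2 * (m : ℝ))) ^ 2| ≤ δ ^ 3 / 2 := by
  set M : ℝ := (m : ℝ) with hMdef
  have hM : (1 : ℝ) ≤ M := by rw [hMdef]; exact_mod_cast hm
  have hMpos : (0 : ℝ) < M := by linarith
  set s := Real.sqrt M with hsdef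
  have hs1 : 1 ≤ s := by
    rw [show (1:ℝ) = Real.sqrt 1 by simp]
    exact Real.sqrt_le_sqrt hM
  have hs2 : s ^ 2 = M := Real.sq_sqrt (by linarith)
  have hsM : s ≤ M := by nlinarith
  -- bound the sum of k_i^4
  have hT : ∑ i ∈ Icc 1 n, (k i) ^ 4 ≤ (δ * s) ^ 3 * (2 * M) := by
    calc ∑ i ∈ Icc 1 n, (k i) ^ 4 ≤ ∑ i ∈ Icc 1 n, (δ * s) ^ 3 * k i := by
          refine Finset.sum_le_sum ?_
          intro i hi
          have h1 := hknn i hi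
          have h2 := hbd i hi
          have h3 : k i ^ 3 ≤ (δ * s) ^ 3 := pow_le_pow_left₀ h1 h2 3
          calc k i ^ 4 = k i ^ 3 * k i := by ring
            _ ≤ (δ * s) ^ 3 * k i := mul_le_mul_of_nonneg_right h3 h1
      _ = (δ * s) ^ 3 * (2 * M) := by rw [← Finset.mul_sum, hksum]
  have hTnn : 0 ≤ ∑ i ∈ Icc 1 n, (k i) ^ 4 := by
    refine Finset.sum_nonneg ?_
    intro i hi
    positivity
  have hsum : ∑ i ∈ Icc 1 n, (k i * k i / (2 * M)) ^ 2
      = (∑ i ∈ Icc 1 n, (k i) ^ 4) / (4 * M ^ 2) := by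
    rw [Finset.sum_div]
    refine Finset.sum_congr rfl ?_
    intro i _
    field_simp
    ring
  rw [hsum]
  have hs3 : (δ * s) ^ 3 * (2 * M) = 2 * (δ ^ 3 * (M * s)) * M := by
    rw [mul_pow, show s ^ 3 = s ^ 2 * s by ring, hs2]; ring
  rw [hs3] at hT
  have key : (∑ i ∈ Icc 1 n, (k i) ^ 4) ≤ 2 * δ ^ 3 * M ^ 3 := by
    nlinarith [mul_nonneg (mul_nonneg (pow_nonneg hδ 3) (sq_nonneg M)) (sub_nonneg.mpr hsM)]
  rw [abs_of_nonneg (by positivity)]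
  have heq : (1 : ℝ) / M * ((∑ i ∈ Icc 1 n, (k i) ^ 4) / (4 * M ^ 2))
      = (∑ i ∈ Icc 1 n, (k i) ^ 4) / (4 * M ^ 3) := by
    rw [one_div, inv_mul_eq_div, div_div]
    congr 1
    ring
  rw [heq, div_le_div_iff₀ (by positivity) (by norm_num)]
  nlinarith [key, hTnn, hMpos]

private lemma aux1' (M C D δ : ℝ) (hM : 1 ≤ M) (hδ : 0 ≤ δ)
    (hCnn : 0 ≤ C) (hCbd : C ≤ 2 * δ ^ 2 * M ^ 2)
    (hDnn : 0 ≤ D) (hDbd : D ≤ 4 * δ ^ 2 * M ^ 3) :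
    |(1 / (2 * M)) * (2 * M - (1 / M) * C + (1 / (4 * M ^ 2)) * D) - 1| ≤ δ ^ 2 := by
  have hMpos : (0 : ℝ) < M := by linarith
  have key : (1 / (2 * M)) * (2 * M - (1 / M) * C + (1 / (4 * M ^ 2)) * D) - 1
      = (D - 4 * M * C) / (8 * M ^ 3) := by
    field_simp
    ring
  rw [key, abs_le]
  constructor
  · rw [le_div_iff₀ (by positivity)]
    nlinarith [hDnn, hCbd, hMpos]
  · rw [div_le_iff₀ (by positivity)]
    nlinarith [hCnn, hDbd, hMpos]

private lemma aux1 (n : ℕ) (A : ℕ → ℕ → ℝ) (m : ℕ) (k : ℕ → ℝ) (δ : ℝ) (hδ : 0 ≤ δ)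
    (hA01 : ∀ i ∈ Icc 1 n, ∀ j ∈ Icc 1 n, A i j = 0 ∨ A i j = 1)
    (hAdiag : ∀ i ∈ Icc 1 n, A i i = 0)
    (hm : 1 ≤ m)
    (hk : ∀ i ∈ Icc 1 n, k i = ∑ j ∈ Icc 1 n, A i j)
    (hknn : ∀ i ∈ Icc 1 n, 0 ≤ k i)
    (hksum : ∑ i ∈ Icc 1 n, k i = 2 * (m : ℝ))
    (hbd : ∀ i ∈ Icc 1 n, k i ≤ δ * Real.sqrt m) :
    |(1 / (2 * (m : ℝ))) * (∑ i ∈ Icc 1 n, ∑ j ∈ Icc 1 n,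
        if i ≠ j then (A i j - k i * k j / (2 * (m : ℝ))) ^ 2 else 0) - 1| ≤ δ ^ 2 := by
  set M : ℝ := (m : ℝ) with hMdef
  have hM : (1 : ℝ) ≤ M := by rw [hMdef]; exact_mod_cast hm
  have hMpos : (0 : ℝ) < M := by linarith
  have hMne : M ≠ 0 := ne_of_gt hMpos
  set s := Real.sqrt M with hsdef
  have hs1 : 1 ≤ s := by
    rw [show (1:ℝ) = Real.sqrt 1 by simp]
    exact Real.sqrt_le_sqrt hM
  have hs2 : s ^ 2 = M := Real.sq_sqrt (by linarith)
  have hAnn : ∀ i ∈ Icc 1 n, ∀ j ∈ Icc 1 n, 0 ≤ A i j := by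
    intro i hi j hj
    rcases hA01 i hi j hj with h | h <;> rw [h] <;> norm_num
  have hAsum : ∑ i ∈ Icc 1 n, ∑ j ∈ Icc 1 n, A i j = 2 * M := by
    rw [← hksum]
    exact Finset.sum_congr rfl (fun i hi => (hk i hi).symm)
  set C := ∑ i ∈ Icc 1 n, ∑ j ∈ Icc 1 n, A i j * (k i * k j) with hCdef
  set D := ∑ i ∈ Icc 1 n, ∑ j ∈ Icc 1 n, (if i ≠ j then (k i * k j) ^ 2 else 0) with hDdef
  have hsum : (∑ i ∈ Icc 1 n, ∑ j ∈ Icc 1 n,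
        if i ≠ j then (A i j - k i * k j / (2 * M)) ^ 2 else 0)
      = 2 * M - (1 / M) * C + (1 / (4 * M ^ 2)) * D := by
    have hpt : ∀ i ∈ Icc 1 n, ∀ j ∈ Icc 1 n,
        (if i ≠ j then (A i j - k i * k j / (2 * M)) ^ 2 else 0)
        = A i j - (1 / M) * (A i j * (k i * k j))
          + (1 / (4 * M ^ 2)) * (if i ≠ j then (k i * k j) ^ 2 else 0) := by
      intro i hi j hj
      by_cases h : i = j
      · subst h
        simp [hAdiag i hi]
      · simp only [h, ne_eq, not_false_eq_true, if_true]
        have hA2 : A i j ^ 2 = A i j := by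
          rcases hA01 i hi j hj with h' | h' <;> rw [h'] <;> norm_num
        have hMne2 : (2 : ℝ) * M ≠ 0 := by positivity
        field_simp
        linear_combination (16 * M ^ 2) * hA2
    calc (∑ i ∈ Icc 1 n, ∑ j ∈ Icc 1 n,
          if i ≠ j then (A i j - k i * k j / (2 * M)) ^ 2 else 0)
        = ∑ i ∈ Icc 1 n, ∑ j ∈ Icc 1 n, (A i j - (1 / M) * (A i j * (k i * k j))
            + (1 / (4 * M ^ 2)) * (if i ≠ j then (k i * k j) ^ 2 else 0)) := by
          refine Finset.sum_congr rfl (fun i hi => Finset.sum_congr rfl (fun j hj => hpt i hi j hj))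
      _ = 2 * M - (1 / M) * C + (1 / (4 * M ^ 2)) * D := by
          simp only [Finset.sum_add_distrib, Finset.sum_sub_distrib, ← Finset.mul_sum]
          rw [hAsum]
  have hCnn : 0 ≤ C := by
    refine Finset.sum_nonneg fun i hi => Finset.sum_nonneg fun j hj => ?_
    have := hAnn i hi j hj
    have := hknn i hi
    have := hknn j hj
    positivity
  have hCbd : C ≤ 2 * δ ^ 2 * M ^ 2 := by
    calc C ≤ ∑ i ∈ Icc 1 n, ∑ j ∈ Icc 1 n, A i j * (δ ^ 2 * M) := by
          refine Finset.sum_le_sum fun i hi => Finset.sum_le_sum fun j hj => ?_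
          have h1 := hknn i hi
          have h2 := hknn j hj
          have h3 := hbd i hi
          have h4 := hbd j hj
          have hkk : k i * k j ≤ δ ^ 2 * M := by nlinarith [hs2]
          exact mul_le_mul_of_nonneg_left hkk (hAnn i hi j hj)
      _ = 2 * δ ^ 2 * M ^ 2 := by
          simp only [← Finset.sum_mul]
          rw [hAsum]; ring
  have hDnn : 0 ≤ D := by
    refine Finset.sum_nonneg fun i hi => Finset.sum_nonneg fun j hj => ?_
    split <;> positivity
  have hDbd : D ≤ 4 * δ ^ 2 * M ^ 3 := by
    have h1 : D ≤ ∑ i ∈ Icc 1 n, ∑ j ∈ Icc 1 n, (k i) ^ 2 * (k j) ^ 2 := by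
      refine Finset.sum_le_sum fun i hi => Finset.sum_le_sum fun j hj => ?_
      split
      · apply le_of_eq; ring
      · positivity
    have h2 : ∑ i ∈ Icc 1 n, ∑ j ∈ Icc 1 n, (k i) ^ 2 * (k j) ^ 2
        = (∑ i ∈ Icc 1 n, (k i) ^ 2) ^ 2 := by
      rw [sq, Finset.sum_mul_sum]
    have h3 : ∑ i ∈ Icc 1 n, (k i) ^ 2 ≤ 2 * δ * s * M := by
      calc ∑ i ∈ Icc 1 n, (k i) ^ 2 ≤ ∑ i ∈ Icc 1 n, (δ * s) * k i := by
            refine Finset.sum_le_sum fun i hi => ?_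
            have := hknn i hi
            have := hbd i hi
            nlinarith
        _ = 2 * δ * s * M := by rw [← Finset.mul_sum, hksum]; ring
    have h4 : 0 ≤ ∑ i ∈ Icc 1 n, (k i) ^ 2 :=
      Finset.sum_nonneg fun i _ => sq_nonneg _
    have h5 : (∑ i ∈ Icc 1 n, (k i) ^ 2) ^ 2 ≤ (2 * δ * s * M) ^ 2 := by
      apply sq_le_sq' <;> nlinarith
    calc D ≤ (∑ i ∈ Icc 1 n, (k i) ^ 2) ^ 2 := by rw [← h2]; exact h1
      _ ≤ (2 * δ * s * M) ^ 2 := h5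
      _ = 4 * δ ^ 2 * M ^ 3 := by rw [show (2*δ*s*M)^2 = 4*δ^2*(s^2)*M^2 by ring, hs2]; ring
  rw [hsum]
  exact aux1' M C D δ hM hδ hCnn hCbd hDnn hDbd

/-- Limits of the normalized sums of `B_{ij}²` (equation (4.13) of the paper). -/
theorem B_squared_sums_limits
    (A : ℕ → ℕ → ℕ → ℝ) (m : ℕ → ℕ) (k : ℕ → ℕ → ℝ)
    (hA01 : ∀ n ≥ 2, ∀ i ∈ Icc 1 n, ∀ j ∈ Icc 1 n, A n i j = 0 ∨ A n i j = 1)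
    (hAsymm : ∀ n ≥ 2, ∀ i ∈ Icc 1 n, ∀ j ∈ Icc 1 n, A n i j = A n j i)
    (hAdiag : ∀ n ≥ 2, ∀ i ∈ Icc 1 n, A n i i = 0)
    (hm : ∀ n ≥ 2, 1 ≤ m n)
    (hk : ∀ n ≥ 2, ∀ i ∈ Icc 1 n, k n i = ∑ j ∈ Icc 1 n, A n i j)
    (hksum : ∀ n ≥ 2, ∑ i ∈ Icc 1 n, k n i = 2 * (m n : ℝ))
    (B : ℕ → ℕ → ℕ → ℝ)
    (hB : ∀ n i j, B n i j = A n i j - k n i * k n j / (2 * (m n : ℝ)))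
    -- `max_{1 ≤ i ≤ n} k_i / √m → 0`
    (hmax : ∀ ε > (0 : ℝ), ∀ᶠ n in Filter.atTop,
      ∀ i ∈ Icc 1 n, k n i / Real.sqrt (m n) ≤ ε) :
    Filter.Tendsto
        (fun n => (1 / (2 * (m n : ℝ))) *
          ∑ i ∈ Icc 1 n, ∑ j ∈ Icc 1 n, if i ≠ j then (B n i j) ^ 2 else 0)
        Filter.atTop (nhds 1)
      ∧ Filter.Tendsto
        (fun n => (1 / (m n : ℝ)) * ∑ i ∈ Icc 1 n, (B n i i) ^ 2)
        Filter.atTop (nhds 0) := by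
  have hknn : ∀ n ≥ 2, ∀ i ∈ Icc 1 n, 0 ≤ k n i := by
    intro n hn i hi
    rw [hk n hn i hi]
    refine Finset.sum_nonneg fun j hj => ?_
    rcases hA01 n hn i hi j hj with h | h <;> rw [h] <;> norm_num
  have hbd : ∀ δ > (0:ℝ), ∀ᶠ n in Filter.atTop,
      n ≥ 2 ∧ ∀ i ∈ Icc 1 n, k n i ≤ δ * Real.sqrt (m n) := by
    intro δ hδ
    filter_upwards [hmax δ hδ, Filter.eventually_ge_atTop 2] with n h1 h2
    refine ⟨h2, fun i hi => ?_⟩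
    have hs : (0:ℝ) < Real.sqrt (m n) := by
      apply Real.sqrt_pos.mpr
      have := hm n h2
      exact_mod_cast Nat.lt_of_lt_of_le Nat.zero_lt_one this
    have := h1 i hi
    calc k n i = (k n i / Real.sqrt (m n)) * Real.sqrt (m n) := by field_simp
      _ ≤ δ * Real.sqrt (m n) := by
          apply mul_le_mul_of_nonneg_right this hs.le
  constructor
  · rw [Metric.tendsto_nhds]
    intro ε hε
    set δ := Real.sqrt (ε / 2) with hδdef
    have hδpos : 0 < δ := Real.sqrt_pos.mpr (by linarith)
    have hδ2 : δ ^ 2 = ε / 2 := Real.sq_sqrt (by linarith)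
    filter_upwards [hbd δ hδpos] with n ⟨hn2, hnb⟩
    rw [Real.dist_eq]
    have hrw : (∑ i ∈ Icc 1 n, ∑ j ∈ Icc 1 n, if i ≠ j then (B n i j) ^ 2 else 0)
        = ∑ i ∈ Icc 1 n, ∑ j ∈ Icc 1 n,
            if i ≠ j then (A n i j - k n i * k n j / (2 * (m n : ℝ))) ^ 2 else 0 := by
      simp only [hB]
    rw [hrw]
    have := aux1 n (A n) (m n) (k n) δ hδpos.le (hA01 n hn2) (hAdiag n hn2)
      (hm n hn2) (hk n hn2) (hknn n hn2) (hksum n hn2) hnb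
    calc |(1 / (2 * (m n : ℝ))) * (∑ i ∈ Icc 1 n, ∑ j ∈ Icc 1 n,
          if i ≠ j then (A n i j - k n i * k n j / (2 * (m n : ℝ))) ^ 2 else 0) - 1|
        ≤ δ ^ 2 := this
      _ < ε := by rw [hδ2]; linarith
  · rw [Metric.tendsto_nhds]
    intro ε hε
    set δ := min 1 ε with hδdef
    have hδpos : 0 < δ := lt_min one_pos hε
    have hδ1 : δ ≤ 1 := min_le_left _ _
    have hδε : δ ≤ ε := min_le_right _ _
    filter_upwards [hbd δ hδpos] with n ⟨hn2, hnb⟩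
    rw [Real.dist_eq, sub_zero]
    have hrw : (∑ i ∈ Icc 1 n, (B n i i) ^ 2)
        = ∑ i ∈ Icc 1 n, (k n i * k n i / (2 * (m n : ℝ))) ^ 2 := by
      refine Finset.sum_congr rfl fun i hi => ?_
      rw [hB, hAdiag n hn2 i hi]
      ring
    rw [hrw]
    have := aux2 n (m n) (k n) δ hδpos.le (hm n hn2) (hknn n hn2) (hksum n hn2) hnb
    calc |(1 / (m n : ℝ)) * ∑ i ∈ Icc 1 n, (k n i * k n i / (2 * (m n : ℝ))) ^ 2|
        ≤ δ ^ 3 / 2 := this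
      _ < ε := by
          have h3 : δ ^ 3 ≤ δ := by nlinarith [mul_nonneg hδpos.le hδpos.le]
          linarith
end

section
/- Suppose there is a constant C > 0 such that max_{1≤i≤n} k_i/√m ≤ C n^{-1/2} for every n ≥ 2, and set a_n = n^{-3/8} (log n)^{-1/2} and δ_n = ((p_{(2)} + p_{(2)}² − 2p_{(3)})/m)^{1/2}. Then there exists a constant H > 0 such that for every n ≥ 2, P( | (1/(2m δ_n)) Σ_{1≤i<j≤n} (k_i k_j / m) h̄(c_i, c_j) | > a_n/2 ) ≤ H n^{-1/4} log n and P( | (1/(2m δ_n)) Σ_{i=1}^n (k_i² / m) (p_{c_i} − p_{(2)}) | > a_n/2 ) ≤ H n^{-1/4} log n. -/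
open MeasureTheory ProbabilityTheory Finset Real

section Aux
variable {Ω : Type*} [MeasureSpace Ω] [IsProbabilityMeasure (ℙ : Measure Ω)]

lemma aux_int_of_bdd {F : Ω → ℝ} (hF : Measurable F) {B : ℝ} (hB : ∀ ω, |F ω| ≤ B) :
    Integrable F ℙ := by
  rw [← memLp_one_iff_integrable]
  exact MemLp.of_bound hF.aestronglyMeasurable B
    (Filter.Eventually.of_forall (by simpa [Real.norm_eq_abs] using hB))

lemma aux_memℒp_of_bdd {F : Ω → ℝ} (hF : Measurable F) {B : ℝ} (hB : ∀ ω, |F ω| ≤ B) :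
    MemLp F 2 ℙ :=
  MemLp.of_bound hF.aestronglyMeasurable B
    (Filter.Eventually.of_forall (by simpa [Real.norm_eq_abs] using hB))

lemma aux_single_integral {K : ℕ} {p : ℕ → ℝ} {c : ℕ → Ω → ℕ}
    (hcmeas : ∀ i, Measurable (c i))
    (hcrange : ∀ i ω, c i ω ∈ Icc 1 K)
    (hcdist : ∀ i, ∀ j ∈ Icc 1 K, (ℙ {ω | c i ω = j}) = ENNReal.ofReal (p j))
    (hp0 : ∀ j ∈ Icc 1 K, 0 ≤ p j)
    (f : ℕ → ℝ) (i : ℕ) :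
    ∫ ω, f (c i ω) ∂ℙ = ∑ j ∈ Icc 1 K, p j * f j := by
  have hrepr : ∀ ω, f (c i ω)
      = ∑ j ∈ Icc 1 K, Set.indicator (c i ⁻¹' {j}) (fun _ => f j) ω := by
    intro ω
    classical
    have : ∀ j, Set.indicator (c i ⁻¹' {j}) (fun _ => f j) ω
        = if c i ω = j then f j else 0 := by
      intro j; rw [Set.indicator_apply]; simp
    simp_rw [this]
    rw [Finset.sum_ite_eq (Icc 1 K) (c i ω) f, if_pos (hcrange i ω)]
  calc ∫ ω, f (c i ω) ∂ℙ
      = ∫ ω, ∑ j ∈ Icc 1 K, Set.indicator (c i ⁻¹' {j}) (fun _ => f j) ω ∂ℙ := by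
        exact integral_congr_ae (Filter.Eventually.of_forall hrepr)
    _ = ∑ j ∈ Icc 1 K, ∫ ω, Set.indicator (c i ⁻¹' {j}) (fun _ => f j) ω ∂ℙ := by
        refine integral_finset_sum _ (fun j _ => ?_)
        exact (integrable_const (f j)).indicator ((hcmeas i) (measurableSet_singleton j))
    _ = ∑ j ∈ Icc 1 K, p j * f j := by
        refine Finset.sum_congr rfl (fun j hj => ?_)
        rw [integral_indicator_const (f j) ((hcmeas i) (measurableSet_singleton j))]
        have : c i ⁻¹' {j} = {ω | c i ω = j} := by ext ω; simp
        rw [this, measureReal_def, hcdist i j hj, ENNReal.toReal_ofReal (hp0 j hj)]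
        simp [mul_comm]

lemma aux_prod_integral {K : ℕ} {p : ℕ → ℝ} {c : ℕ → Ω → ℕ}
    (hcmeas : ∀ i, Measurable (c i))
    (hcrange : ∀ i ω, c i ω ∈ Icc 1 K)
    (hcindep : iIndepFun c ℙ)
    (hcdist : ∀ i, ∀ j ∈ Icc 1 K, (ℙ {ω | c i ω = j}) = ENNReal.ofReal (p j))
    (hp0 : ∀ j ∈ Icc 1 K, 0 ≤ p j)
    (s : Finset ℕ) (f : ℕ → ℕ → ℝ) :
    ∫ ω, ∏ i ∈ s, f i (c i ω) ∂ℙ = ∏ i ∈ s, ∑ j ∈ Icc 1 K, p j * f i j := by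
  classical
  have hY : iIndepFun
      (fun i => (f i) ∘ (c i)) ℙ :=
    hcindep.comp (fun i => f i) (fun i => measurable_of_countable (f i))
  have hYmeas : ∀ i, Measurable ((f i) ∘ (c i)) :=
    fun i => (measurable_of_countable (f i)).comp (hcmeas i)
  induction s using Finset.induction_on with
  | empty => simp
  | @insert a s ha ih =>
      have hindep : IndepFun (∏ j ∈ s, (f j) ∘ (c j)) ((f a) ∘ (c a)) ℙ :=
        hY.indepFun_finset_prod_of_notMem hYmeas ha
      have hprodapp : ∀ ω, (∏ j ∈ s, (f j) ∘ (c j)) ω = ∏ j ∈ s, f j (c j ω) := by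
        intro ω; simp [Finset.prod_apply]
      have hmul : ((f a) ∘ (c a)) * (∏ j ∈ s, (f j) ∘ (c j))
          = fun ω => ∏ i ∈ insert a s, f i (c i ω) := by
        funext ω
        simp only [Pi.mul_apply, hprodapp, Function.comp_apply]
        rw [Finset.prod_insert ha]
      have hm2 : Measurable (∏ j ∈ s, (f j) ∘ (c j)) := by
        rw [show (∏ j ∈ s, (f j) ∘ (c j)) = fun ω => ∏ j ∈ s, f j (c j ω) from funext hprodapp]
        exact Finset.measurable_prod s (fun i _ => hYmeas i)
      have hint := hindep.symm.integral_mul_eq_mul_integral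
        ((hYmeas a).aestronglyMeasurable)
        (hm2.aestronglyMeasurable)
      rw [hmul] at hint
      rw [hint, Finset.prod_insert ha]
      congr 1
      · exact aux_single_integral hcmeas hcrange hcdist hp0 (f a) a
      · rw [← ih]
        exact integral_congr_ae (Filter.Eventually.of_forall hprodapp)

lemma aux_mean_integral {ι : Type*} (P : Finset ι) (W : ι → ℝ) (Hh : ι → Ω → ℝ)
    (hmeas : ∀ x ∈ P, Measurable (Hh x)) (hbd : ∀ x ∈ P, ∀ ω, |Hh x ω| ≤ 4)
    (hmean : ∀ x ∈ P, ∫ ω, Hh x ω ∂ℙ = 0) :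
    ∫ ω, ∑ x ∈ P, W x * Hh x ω ∂ℙ = 0 := by
  rw [integral_finset_sum]
  · refine Finset.sum_eq_zero (fun x hx => ?_)
    rw [integral_const_mul, hmean x hx, mul_zero]
  · intro x hx
    exact aux_int_of_bdd (measurable_const.mul (hmeas x hx)) (B := |W x| * 4)
      (fun ω => by rw [abs_mul]; exact mul_le_mul_of_nonneg_left (hbd x hx ω) (abs_nonneg _))

lemma aux_sq_integral {ι : Type*} [DecidableEq ι] (P : Finset ι) (W : ι → ℝ) (Hh : ι → Ω → ℝ)
    (hmeas : ∀ x ∈ P, Measurable (Hh x)) (hbd : ∀ x ∈ P, ∀ ω, |Hh x ω| ≤ 4)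
    (hzero : ∀ x ∈ P, ∀ y ∈ P, x ≠ y → ∫ ω, Hh x ω * Hh y ω ∂ℙ = 0) :
    ∫ ω, (∑ x ∈ P, W x * Hh x ω)^2 ∂ℙ ≤ 16 * ∑ x ∈ P, W x ^ 2 := by
  have hintt : ∀ x ∈ P, ∀ y ∈ P, Integrable (fun ω => (W x * W y) * (Hh x ω * Hh y ω)) ℙ := by
    intro x hx y hy
    refine aux_int_of_bdd (measurable_const.mul ((hmeas x hx).mul (hmeas y hy)))
      (B := |W x * W y| * 16) (fun ω => ?_)
    rw [abs_mul]
    refine mul_le_mul_of_nonneg_left ?_ (abs_nonneg _)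
    rw [abs_mul]
    calc |Hh x ω| * |Hh y ω| ≤ 4 * 4 :=
          mul_le_mul (hbd x hx ω) (hbd y hy ω) (abs_nonneg _) (by norm_num)
      _ = 16 := by norm_num
  have hexp : ∀ ω, (∑ x ∈ P, W x * Hh x ω)^2
      = ∑ x ∈ P, ∑ y ∈ P, (W x * W y) * (Hh x ω * Hh y ω) := by
    intro ω
    rw [sq, Finset.sum_mul_sum]
    exact Finset.sum_congr rfl fun x _ => Finset.sum_congr rfl fun y _ => by ring
  calc ∫ ω, (∑ x ∈ P, W x * Hh x ω)^2 ∂ℙ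
      = ∫ ω, ∑ x ∈ P, ∑ y ∈ P, (W x * W y) * (Hh x ω * Hh y ω) ∂ℙ :=
        integral_congr_ae (Filter.Eventually.of_forall (fun ω => hexp ω))
    _ = ∑ x ∈ P, ∑ y ∈ P, ∫ ω, (W x * W y) * (Hh x ω * Hh y ω) ∂ℙ := by
        rw [integral_finset_sum _ (fun x hx =>
          integrable_finset_sum _ (fun y hy => hintt x hx y hy))]
        exact Finset.sum_congr rfl fun x hx => integral_finset_sum _ (fun y hy => hintt x hx y hy)
    _ = ∑ x ∈ P, (W x * W x) * ∫ ω, Hh x ω * Hh x ω ∂ℙ := by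
        refine Finset.sum_congr rfl (fun x hx => ?_)
        rw [Finset.sum_eq_single_of_mem x hx]
        · rw [integral_const_mul]
        · intro y hy hyx
          rw [integral_const_mul, hzero x hx y hy (Ne.symm hyx), mul_zero]
    _ ≤ ∑ x ∈ P, W x ^ 2 * 16 := by
        refine Finset.sum_le_sum (fun x hx => ?_)
        rw [← sq]
        refine mul_le_mul_of_nonneg_left ?_ (sq_nonneg _)
        have hbd16 : ∀ ω, Hh x ω * Hh x ω ≤ 16 := by
          intro ω
          rw [← abs_mul_abs_self (Hh x ω)]
          calc |Hh x ω| * |Hh x ω| ≤ 4 * 4 :=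
                mul_le_mul (hbd x hx ω) (hbd x hx ω) (abs_nonneg _) (by norm_num)
            _ = 16 := by norm_num
        calc ∫ ω, Hh x ω * Hh x ω ∂ℙ ≤ ∫ _ω, (16:ℝ) ∂ℙ := by
              refine integral_mono ?_ (integrable_const _) hbd16
              refine aux_int_of_bdd ((hmeas x hx).mul (hmeas x hx)) (B := 16) (fun ω => ?_)
              rw [abs_mul]
              calc |Hh x ω| * |Hh x ω| ≤ 4 * 4 :=
                    mul_le_mul (hbd x hx ω) (hbd x hx ω) (abs_nonneg _) (by norm_num)
                _ = 16 := by norm_num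
          _ = 16 := by simp
    _ = 16 * ∑ x ∈ P, W x ^ 2 := by rw [← Finset.sum_mul, mul_comm]

lemma aux_cheb {X : Ω → ℝ} (hX : MemLp X 2 ℙ) (hmean : ∫ ω, X ω ∂ℙ = 0) {t : ℝ} (ht : 0 < t) :
    (ℙ {ω | t < |X ω|}).toReal ≤ (∫ ω, X ω ^ 2 ∂ℙ) / t ^ 2 := by
  have h2 := meas_ge_le_variance_div_sq (μ := ℙ) hX ht
  have h1 : ℙ {ω | t < |X ω|} ≤ ℙ {ω | t ≤ |X ω - ℙ[X]|} := by
    apply measure_mono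
    intro ω hω
    have h0 : ℙ[X] = 0 := hmean
    simp only [Set.mem_setOf_eq, h0, sub_zero] at *
    exact le_of_lt hω
  have h3 : variance X ℙ = ∫ ω, X ω ^ 2 ∂ℙ := by
    rw [variance_eq_sub hX]
    have : ℙ[X ^ 2] = ∫ ω, X ω ^ 2 ∂ℙ := by rfl
    rw [this, hmean]
    ring
  calc (ℙ {ω | t < |X ω|}).toReal
      ≤ (ENNReal.ofReal (variance X ℙ / t ^ 2)).toReal :=
        ENNReal.toReal_mono (by simp) (le_trans h1 h2)
    _ ≤ variance X ℙ / t ^ 2 := by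
        rw [ENNReal.toReal_ofReal (div_nonneg (variance_nonneg X ℙ) (sq_nonneg t))]
    _ = (∫ ω, X ω ^ 2 ∂ℙ) / t ^ 2 := by rw [h3]

end Aux

set_option maxHeartbeats 2000000 in
/-- Tail bounds for the remainder terms (equations (4.16) and (4.17)). -/
theorem remainder_terms_tail_bounds
    {Ω : Type*} [MeasureSpace Ω] [IsProbabilityMeasure (ℙ : Measure Ω)]
    (A : ℕ → ℕ → ℕ → ℝ) (m : ℕ → ℕ) (k : ℕ → ℕ → ℝ)
    (hA01 : ∀ n ≥ 2, ∀ i ∈ Icc 1 n, ∀ j ∈ Icc 1 n, A n i j = 0 ∨ A n i j = 1)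
    (hAsymm : ∀ n ≥ 2, ∀ i ∈ Icc 1 n, ∀ j ∈ Icc 1 n, A n i j = A n j i)
    (hAdiag : ∀ n ≥ 2, ∀ i ∈ Icc 1 n, A n i i = 0)
    (hm : ∀ n ≥ 2, 1 ≤ m n)
    (hk : ∀ n ≥ 2, ∀ i ∈ Icc 1 n, k n i = ∑ j ∈ Icc 1 n, A n i j)
    (hksum : ∀ n ≥ 2, ∑ i ∈ Icc 1 n, k n i = 2 * (m n : ℝ))
    (K : ℕ) (hK : 1 ≤ K) (p : ℕ → ℝ)
    (hp0 : ∀ j ∈ Icc 1 K, 0 ≤ p j) (hp1 : ∑ j ∈ Icc 1 K, p j = 1)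
    (p2 p3 : ℝ)
    (hp2 : p2 = ∑ j ∈ Icc 1 K, (p j) ^ 2) (hp3 : p3 = ∑ j ∈ Icc 1 K, (p j) ^ 3)
    (hpos : 0 < p2 + p2 ^ 2 - 2 * p3)
    (c : ℕ → Ω → ℕ)
    (hcmeas : ∀ i, Measurable (c i))
    (hcrange : ∀ i ω, c i ω ∈ Icc 1 K)
    (hcindep : iIndepFun c ℙ)
    (hcdist : ∀ i, ∀ j ∈ Icc 1 K, (ℙ {ω | c i ω = j}) = ENNReal.ofReal (p j))
    (hbar : ℕ → ℕ → ℝ)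
    (hhbar : ∀ x y, hbar x y = (if x = y then (1 : ℝ) else 0) - p x - p y + p2)
    (δ : ℕ → ℝ)
    (hδ : ∀ n, δ n = Real.sqrt ((p2 + p2 ^ 2 - 2 * p3) / (m n : ℝ)))
    (a : ℕ → ℝ)
    (ha : ∀ n, a n = (n : ℝ) ^ (-(3 / 8 : ℝ)) * (Real.log n) ^ (-(1 / 2 : ℝ)))
    (C : ℝ) (hC : 0 < C)
    (hdeg : ∀ n ≥ 2, ∀ i ∈ Icc 1 n,
      k n i / Real.sqrt (m n) ≤ C * (n : ℝ) ^ (-(1 / 2 : ℝ))) :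
    ∃ H > (0 : ℝ), ∀ n : ℕ, 2 ≤ n →
      (ℙ {ω | a n / 2 <
          |(1 / (2 * (m n : ℝ) * δ n)) * ∑ i ∈ Icc 1 n, ∑ j ∈ Ioc i n,
            (k n i * k n j / (m n : ℝ)) * hbar (c i ω) (c j ω)|}).toReal
        ≤ H * (n : ℝ) ^ (-(1 / 4 : ℝ)) * Real.log n
      ∧ (ℙ {ω | a n / 2 <
          |(1 / (2 * (m n : ℝ) * δ n)) * ∑ i ∈ Icc 1 n,
            ((k n i) ^ 2 / (m n : ℝ)) * (p (c i ω) - p2)|}).toReal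
        ≤ H * (n : ℝ) ^ (-(1 / 4 : ℝ)) * Real.log n := by
  classical
  set σ2 : ℝ := p2 + p2 ^ 2 - 2 * p3 with hσ2
  set D : ℝ := (16 * C ^ 2 + 8 * C ^ 3) / σ2 with hD
  have hD0 : 0 < D := by
    apply div_pos _ hpos
    positivity
  -- basic facts about p
  have hple1 : ∀ j ∈ Icc 1 K, p j ≤ 1 := by
    intro j hj
    rw [← hp1]
    exact Finset.single_le_sum hp0 hj
  have hp2nonneg : 0 ≤ p2 := by
    rw [hp2]; exact Finset.sum_nonneg fun j _ => sq_nonneg _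
  have hp2le1 : p2 ≤ 1 := by
    rw [hp2, ← hp1]
    exact Finset.sum_le_sum fun j hj => by nlinarith [hp0 j hj, hple1 j hj]
  -- the centered indicator functions
  set φ : ℕ → ℕ → ℝ := fun t x => (if x = t then (1:ℝ) else 0) - p t with hφ
  have hφmeas : ∀ t i, Measurable fun ω => φ t (c i ω) :=
    fun t i => (measurable_of_countable (φ t)).comp (hcmeas i)
  have hφbd : ∀ t ∈ Icc 1 K, ∀ x, |φ t x| ≤ 2 := by
    intro t ht x
    have h1 : (0:ℝ) ≤ if x = t then (1:ℝ) else 0 := by split <;> norm_num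
    have h2 : (if x = t then (1:ℝ) else 0) ≤ 1 := by split <;> norm_num
    have := hp0 t ht; have := hple1 t ht
    rw [abs_le]; constructor <;> simp only [φ] <;> nlinarith
  have hmz : ∀ t ∈ Icc 1 K, ∑ j ∈ Icc 1 K, p j * φ t j = 0 := by
    intro t ht
    have : ∀ j, p j * φ t j = (if j = t then p j else 0) - p j * p t := by
      intro j; simp only [φ]; split <;> ring
    simp_rw [this]
    rw [Finset.sum_sub_distrib, Finset.sum_ite_eq' (Icc 1 K) t p, if_pos ht,
      ← Finset.sum_mul, hp1, one_mul, sub_self]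
  have hbar_eq : ∀ x ∈ Icc 1 K, ∀ y ∈ Icc 1 K,
      hbar x y = ∑ t ∈ Icc 1 K, φ t x * φ t y := by
    intro x hx y hy
    have key : ∀ t, φ t x * φ t y
        = ((if x = t then (if y = t then (1:ℝ) else 0) else 0)
            - (if x = t then p t else 0)) - (if y = t then p t else 0) + p t ^ 2 := by
      intro t; simp only [φ]
      by_cases h1 : x = t <;> by_cases h2 : y = t <;> simp [h1, h2] <;> ring
    simp_rw [key]
    rw [Finset.sum_add_distrib, Finset.sum_sub_distrib, Finset.sum_sub_distrib]
    rw [Finset.sum_ite_eq (Icc 1 K) x (fun t => if y = t then (1:ℝ) else 0), if_pos hx]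
    rw [Finset.sum_ite_eq (Icc 1 K) x p, if_pos hx]
    rw [Finset.sum_ite_eq (Icc 1 K) y p, if_pos hy]
    rw [hhbar, ← hp2]
    congr 2
    by_cases h : x = y <;> simp [h, eq_comm]
  have hbarbd : ∀ x ∈ Icc 1 K, ∀ y ∈ Icc 1 K, |hbar x y| ≤ 4 := by
    intro x hx y hy
    have h1 : (0:ℝ) ≤ if x = y then (1:ℝ) else 0 := by split <;> norm_num
    have h2 : (if x = y then (1:ℝ) else 0) ≤ 1 := by split <;> norm_num
    have := hp0 x hx; have := hple1 x hx; have := hp0 y hy; have := hple1 y hy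
    rw [hhbar, abs_le]; constructor <;> nlinarith
  have hHmeas : ∀ i j, Measurable fun ω => hbar (c i ω) (c j ω) := by
    intro i j
    exact (measurable_of_countable (fun q : ℕ × ℕ => hbar q.1 q.2)).comp
      ((hcmeas i).prodMk (hcmeas j))
  -- expectation lemmas
  have hEφ2 : ∀ (i j t u : ℕ), i ≠ j → t ∈ Icc 1 K →
      ∫ ω, φ t (c i ω) * φ u (c j ω) ∂ℙ = 0 := by
    intro i j t u hij ht
    set g : ℕ → ℕ → ℝ := fun r x => if r = i then φ t x else φ u x with hg
    have hpt : ∀ ω, φ t (c i ω) * φ u (c j ω)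
        = ∏ r ∈ ({i, j} : Finset ℕ), g r (c r ω) := by
      intro ω
      rw [Finset.prod_pair hij]
      simp [g, hij.symm]
    rw [integral_congr_ae (Filter.Eventually.of_forall hpt),
      aux_prod_integral hcmeas hcrange hcindep hcdist hp0 ({i, j} : Finset ℕ) g,
      Finset.prod_pair hij]
    have h1 : ∑ j' ∈ Icc 1 K, p j' * g i j' = 0 := by
      have : ∀ j', g i j' = φ t j' := fun j' => by simp [g]
      simp_rw [this]; exact hmz t ht
    rw [h1, zero_mul]
  have hEφ4 : ∀ (i j i' j' t u w : ℕ), t ∈ Icc 1 K → u ∈ Icc 1 K →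
      w ∈ ({i, j, i', j'} : Finset ℕ) →
      ((w = i ∧ w ≠ j ∧ w ≠ i' ∧ w ≠ j') ∨ (w ≠ i ∧ w = j ∧ w ≠ i' ∧ w ≠ j') ∨
       (w ≠ i ∧ w ≠ j ∧ w = i' ∧ w ≠ j') ∨ (w ≠ i ∧ w ≠ j ∧ w ≠ i' ∧ w = j')) →
      ∫ ω, φ t (c i ω) * φ t (c j ω) * (φ u (c i' ω) * φ u (c j' ω)) ∂ℙ = 0 := by
    intro i j i' j' t u w ht hu hw hd
    set g : ℕ → ℕ → ℝ := fun r x => (if r = i then φ t x else 1) *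
      ((if r = j then φ t x else 1) * ((if r = i' then φ u x else 1) *
        (if r = j' then φ u x else 1))) with hg
    have hpt : ∀ ω, φ t (c i ω) * φ t (c j ω) * (φ u (c i' ω) * φ u (c j' ω))
        = ∏ r ∈ ({i, j, i', j'} : Finset ℕ), g r (c r ω) := by
      intro ω
      simp only [g]
      rw [Finset.prod_mul_distrib, Finset.prod_mul_distrib, Finset.prod_mul_distrib]
      rw [Finset.prod_ite_eq' ({i, j, i', j'} : Finset ℕ) i (fun r => φ t (c r ω)),
        Finset.prod_ite_eq' ({i, j, i', j'} : Finset ℕ) j (fun r => φ t (c r ω)),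
        Finset.prod_ite_eq' ({i, j, i', j'} : Finset ℕ) i' (fun r => φ u (c r ω)),
        Finset.prod_ite_eq' ({i, j, i', j'} : Finset ℕ) j' (fun r => φ u (c r ω))]
      have m1 : i ∈ ({i, j, i', j'} : Finset ℕ) := by simp
      have m2 : j ∈ ({i, j, i', j'} : Finset ℕ) := by simp
      have m3 : i' ∈ ({i, j, i', j'} : Finset ℕ) := by simp
      have m4 : j' ∈ ({i, j, i', j'} : Finset ℕ) := by simp
      rw [if_pos m1, if_pos m2, if_pos m3, if_pos m4]
      ring
    rw [integral_congr_ae (Filter.Eventually.of_forall hpt),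
      aux_prod_integral hcmeas hcrange hcindep hcdist hp0 ({i, j, i', j'} : Finset ℕ) g]
    apply Finset.prod_eq_zero hw
    rcases hd with ⟨h1, h2, h3, h4⟩ | ⟨h1, h2, h3, h4⟩ | ⟨h1, h2, h3, h4⟩ | ⟨h1, h2, h3, h4⟩
    · have : ∀ x, g w x = φ t x := fun x => by
        simp only [g]; rw [if_pos h1, if_neg h2, if_neg h3, if_neg h4]; ring
      simp_rw [this]; exact hmz t ht
    · have : ∀ x, g w x = φ t x := fun x => by
        simp only [g]; rw [if_neg h1, if_pos h2, if_neg h3, if_neg h4]; ring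
      simp_rw [this]; exact hmz t ht
    · have : ∀ x, g w x = φ u x := fun x => by
        simp only [g]; rw [if_neg h1, if_neg h2, if_pos h3, if_neg h4]; ring
      simp_rw [this]; exact hmz u hu
    · have : ∀ x, g w x = φ u x := fun x => by
        simp only [g]; rw [if_neg h1, if_neg h2, if_neg h3, if_pos h4]; ring
      simp_rw [this]; exact hmz u hu
  have hHmean : ∀ (i j : ℕ), i ≠ j → ∫ ω, hbar (c i ω) (c j ω) ∂ℙ = 0 := by
    intro i j hij
    have hpt : ∀ ω, hbar (c i ω) (c j ω)
        = ∑ t ∈ Icc 1 K, φ t (c i ω) * φ t (c j ω) := fun ω =>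
      hbar_eq _ (hcrange i ω) _ (hcrange j ω)
    rw [integral_congr_ae (Filter.Eventually.of_forall hpt),
      integral_finset_sum _ (fun t ht => aux_int_of_bdd
        (F := fun ω => φ t (c i ω) * φ t (c j ω)) ((hφmeas t i).mul (hφmeas t j)) (B := 4) (fun ω => by
          rw [abs_mul]
          calc |φ t (c i ω)| * |φ t (c j ω)| ≤ 2 * 2 :=
                mul_le_mul (hφbd t ht _) (hφbd t ht _) (abs_nonneg _) (by norm_num)
            _ = 4 := by norm_num))]
    exact Finset.sum_eq_zero fun t ht => hEφ2 i j t t hij ht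
  have hHzero : ∀ (i j i' j' : ℕ), i < j → i' < j' → (i, j) ≠ (i', j') →
      ∫ ω, hbar (c i ω) (c j ω) * hbar (c i' ω) (c j' ω) ∂ℙ = 0 := by
    intro i j i' j' hij hij' hne
    obtain ⟨w, hw, hd⟩ : ∃ w, w ∈ ({i, j, i', j'} : Finset ℕ) ∧
        ((w = i ∧ w ≠ j ∧ w ≠ i' ∧ w ≠ j') ∨ (w ≠ i ∧ w = j ∧ w ≠ i' ∧ w ≠ j') ∨
         (w ≠ i ∧ w ≠ j ∧ w = i' ∧ w ≠ j') ∨ (w ≠ i ∧ w ≠ j ∧ w ≠ i' ∧ w = j')) := by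
      by_cases h1 : i = i'
      · have hjj' : j ≠ j' := fun h => hne (by rw [h1, h])
        exact ⟨j, by simp, Or.inr (Or.inl ⟨(ne_of_gt hij), rfl,
          by rw [← h1]; exact (ne_of_gt hij), hjj'⟩)⟩
      · by_cases h2 : j = i'
        · refine ⟨j', by simp, Or.inr (Or.inr (Or.inr ⟨?_, ?_, ne_of_gt hij', rfl⟩))⟩
          · exact ne_of_gt (lt_trans (lt_of_lt_of_le hij (le_of_eq h2)) hij')
          · exact ne_of_gt (h2 ▸ hij')
        · by_cases h3 : j = j'
          · exact ⟨i, by simp, Or.inl ⟨rfl, ne_of_lt hij, h1, by rw [← h3]; exact ne_of_lt hij⟩⟩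
          · exact ⟨j, by simp, Or.inr (Or.inl ⟨ne_of_gt hij, rfl, h2, h3⟩)⟩
    have hpt : ∀ ω, hbar (c i ω) (c j ω) * hbar (c i' ω) (c j' ω)
        = ∑ t ∈ Icc 1 K, ∑ u ∈ Icc 1 K,
            φ t (c i ω) * φ t (c j ω) * (φ u (c i' ω) * φ u (c j' ω)) := by
      intro ω
      rw [hbar_eq _ (hcrange i ω) _ (hcrange j ω),
        hbar_eq _ (hcrange i' ω) _ (hcrange j' ω), Finset.sum_mul_sum]
    have hintphi : ∀ t ∈ Icc 1 K, ∀ u ∈ Icc 1 K, Integrable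
        (fun ω => φ t (c i ω) * φ t (c j ω) * (φ u (c i' ω) * φ u (c j' ω))) ℙ := by
      intro t ht u hu
      refine aux_int_of_bdd (((hφmeas t i).mul (hφmeas t j)).mul
        ((hφmeas u i').mul (hφmeas u j'))) (B := 16) (fun ω => ?_)
      rw [abs_mul, abs_mul, abs_mul]
      have b1 := hφbd t ht (c i ω); have b2 := hφbd t ht (c j ω)
      have b3 := hφbd u hu (c i' ω); have b4 := hφbd u hu (c j' ω)
      have a1 := abs_nonneg (φ t (c i ω)); have a2 := abs_nonneg (φ t (c j ω))
      have a3 := abs_nonneg (φ u (c i' ω)); have a4 := abs_nonneg (φ u (c j' ω))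
      calc |φ t (c i ω)| * |φ t (c j ω)| * (|φ u (c i' ω)| * |φ u (c j' ω)|)
          ≤ (2 * 2) * (2 * 2) := by
            refine mul_le_mul ?_ ?_ (by positivity) (by norm_num)
            · exact mul_le_mul b1 b2 a2 (by norm_num)
            · exact mul_le_mul b3 b4 a4 (by norm_num)
        _ = 16 := by norm_num
    rw [integral_congr_ae (Filter.Eventually.of_forall hpt),
      integral_finset_sum _ (fun t ht => integrable_finset_sum _ (fun u hu => hintphi t ht u hu))]
    refine Finset.sum_eq_zero fun t ht => ?_
    rw [integral_finset_sum _ (fun u hu => hintphi t ht u hu)]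
    exact Finset.sum_eq_zero fun u hu => hEφ4 i j i' j' t u w ht hu hw hd
  have hVsum : ∑ j ∈ Icc 1 K, p j * (p j - p2) = 0 := by
    have : ∀ j, p j * (p j - p2) = p j ^ 2 - p j * p2 := fun j => by ring
    simp_rw [this]
    rw [Finset.sum_sub_distrib, ← hp2, ← Finset.sum_mul, hp1, one_mul, sub_self]
  have hVmean : ∀ i, ∫ ω, (p (c i ω) - p2) ∂ℙ = 0 := by
    intro i
    rw [aux_single_integral hcmeas hcrange hcdist hp0 (fun x => p x - p2) i]
    exact hVsum
  have hVzero : ∀ i j, i ≠ j → ∫ ω, (p (c i ω) - p2) * (p (c j ω) - p2) ∂ℙ = 0 := by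
    intro i j hij
    have hpt : ∀ ω, (p (c i ω) - p2) * (p (c j ω) - p2)
        = ∏ r ∈ ({i, j} : Finset ℕ), (fun _ x => p x - p2 : ℕ → ℕ → ℝ) r (c r ω) := by
      intro ω; rw [Finset.prod_pair hij]
    have h := aux_prod_integral hcmeas hcrange hcindep hcdist hp0 ({i, j} : Finset ℕ)
      (fun _ x => p x - p2)
    rw [integral_congr_ae (Filter.Eventually.of_forall hpt), h, Finset.prod_pair hij]
    show (∑ j' ∈ Icc 1 K, p j' * (p j' - p2)) * (∑ j' ∈ Icc 1 K, p j' * (p j' - p2)) = 0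
    rw [hVsum, zero_mul]
  have hVbd : ∀ x ∈ Icc 1 K, |p x - p2| ≤ 4 := by
    intro x hx
    have := hp0 x hx; have := hple1 x hx
    rw [abs_le]; constructor <;> nlinarith
  have hVmeas : ∀ i, Measurable fun ω => p (c i ω) - p2 :=
    fun i => ((measurable_of_countable p).comp (hcmeas i)).sub measurable_const
  refine ⟨4 * D + 1, by positivity, ?_⟩
  intro n hn
  have hnR1 : (1:ℝ) < (n:ℝ) := by exact_mod_cast lt_of_lt_of_le one_lt_two hn
  have hnR0 : (0:ℝ) < (n:ℝ) := lt_trans one_pos hnR1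
  have hL : 0 < Real.log n := Real.log_pos hnR1
  set M : ℝ := (m n : ℝ) with hMdef
  have hM1 : (1:ℝ) ≤ M := by rw [hMdef]; exact_mod_cast hm n hn
  have hM0 : (0:ℝ) < M := lt_of_lt_of_le one_pos hM1
  have hδpos : 0 < δ n := by rw [hδ]; exact Real.sqrt_pos.mpr (div_pos hpos hM0)
  have hδsq : (δ n) ^ 2 = σ2 / M := by
    rw [hδ]; exact Real.sq_sqrt (le_of_lt (div_pos hpos hM0))
  have hsqM : 0 < Real.sqrt M := Real.sqrt_pos.mpr hM0
  have hsqMsq : Real.sqrt M ^ 2 = M := Real.sq_sqrt hM0.le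
  have hsqM1 : 1 ≤ Real.sqrt M := by
    rw [show (1:ℝ) = Real.sqrt 1 by simp]
    exact Real.sqrt_le_sqrt hM1
  set r : ℝ := (n:ℝ) ^ (-(1/2 : ℝ)) with hr
  have hr0 : 0 < r := Real.rpow_pos_of_pos hnR0 _
  have hr2 : r ^ 2 = ((n:ℝ))⁻¹ := by
    rw [hr, ← Real.rpow_natCast ((n:ℝ) ^ (-(1/2:ℝ))) 2, ← Real.rpow_mul hnR0.le]
    norm_num
    exact Real.rpow_neg_one _
  have hr1 : r ≤ 1 := Real.rpow_le_one_of_one_le_of_nonpos hnR1.le (by norm_num)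
  set κ : ℝ := C * r * Real.sqrt M with hκ
  have hκ0 : 0 ≤ κ := by positivity
  have hu0 : ∀ i ∈ Icc 1 n, 0 ≤ k n i := by
    intro i hi
    rw [hk n hn i hi]
    refine Finset.sum_nonneg fun j hj => ?_
    rcases hA01 n hn i hi j hj with h | h <;> rw [h] <;> norm_num
  have huκ : ∀ i ∈ Icc 1 n, k n i ≤ κ := by
    intro i hi
    have h := hdeg n hn i hi
    rw [div_le_iff₀ hsqM] at h
    exact h
  have hsumk : ∑ i ∈ Icc 1 n, k n i = 2 * M := hksum n hn
  have hsumsq : ∑ i ∈ Icc 1 n, (k n i) ^ 2 ≤ κ * (2 * M) := by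
    calc ∑ i ∈ Icc 1 n, (k n i) ^ 2 ≤ ∑ i ∈ Icc 1 n, κ * k n i :=
          Finset.sum_le_sum fun i hi => by
            rw [pow_two]
            exact mul_le_mul_of_nonneg_right (huκ i hi) (hu0 i hi)
      _ = κ * (2 * M) := by rw [← Finset.mul_sum, hsumk]
  have hsumsq0 : 0 ≤ ∑ i ∈ Icc 1 n, (k n i) ^ 2 :=
    Finset.sum_nonneg fun i _ => sq_nonneg _
  have hapos : 0 < a n := by
    rw [ha]
    exact mul_pos (Real.rpow_pos_of_pos hnR0 _) (Real.rpow_pos_of_pos hL _)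
  have hcst : (1 / (2 * M * δ n)) ^ 2 = 1 / (4 * M * σ2) := by
    rw [div_pow, one_pow, mul_pow, mul_pow, hδsq]
    congr 1
    field_simp
    ring
  have hkey : ∀ X : Ω → ℝ, MemLp X 2 ℙ → (∫ ω, X ω ∂ℙ) = 0 →
      (∫ ω, X ω ^ 2 ∂ℙ) ≤ D / (n:ℝ) →
      (ℙ {ω | a n / 2 < |X ω|}).toReal ≤ (4 * D + 1) * (n:ℝ) ^ (-(1/4 : ℝ)) * Real.log n := by
    intro X hXm hX0 hXsq
    have ht : 0 < a n / 2 := by positivity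
    have h1 := aux_cheb hXm hX0 ht
    have h2 : (∫ ω, X ω ^ 2 ∂ℙ) / (a n / 2) ^ 2 ≤ (D / (n:ℝ)) / (a n / 2) ^ 2 :=
      (div_le_div_iff_of_pos_right (pow_pos ht 2)).mpr hXsq
    have e1 : ((n:ℝ) ^ (-(3/8) : ℝ)) ^ 2 = (n:ℝ) ^ (-(3/4) : ℝ) := by
      rw [← Real.rpow_natCast ((n:ℝ) ^ (-(3/8):ℝ)) 2, ← Real.rpow_mul hnR0.le]
      norm_num
    have e2 : ((Real.log n) ^ (-(1/2) : ℝ)) ^ 2 = (Real.log n)⁻¹ := by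
      rw [← Real.rpow_natCast ((Real.log n) ^ (-(1/2):ℝ)) 2, ← Real.rpow_mul hL.le]
      norm_num
      exact Real.rpow_neg_one _
    have e3 : (n:ℝ) * (n:ℝ) ^ (-(3/4) : ℝ) = (n:ℝ) ^ ((1:ℝ)/4) := by
      nth_rewrite 1 [← Real.rpow_one (n:ℝ)]
      rw [← Real.rpow_add hnR0]
      norm_num
    have e4 : (n:ℝ) ^ (-(1/4) : ℝ) = ((n:ℝ) ^ ((1:ℝ)/4))⁻¹ := by
      rw [← Real.rpow_neg hnR0.le]
    have hQ : (0:ℝ) < (n:ℝ) ^ (-(3/4) : ℝ) := Real.rpow_pos_of_pos hnR0 _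
    have hR : (0:ℝ) < (n:ℝ) ^ ((1:ℝ)/4) := Real.rpow_pos_of_pos hnR0 _
    have e5 : (D / (n:ℝ)) / (a n / 2) ^ 2
        = 4 * D * (n:ℝ) ^ (-(1/4) : ℝ) * Real.log n := by
      rw [ha, div_pow, mul_pow, e1, e2, e4]
      rw [show ((2:ℝ)) ^ 2 = 4 by norm_num]
      calc (D / (n:ℝ)) / ((n:ℝ) ^ (-(3/4):ℝ) * (Real.log n)⁻¹ / 4)
          = 4 * D * Real.log n / ((n:ℝ) * (n:ℝ) ^ (-(3/4):ℝ)) := by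
            field_simp
        _ = 4 * D * Real.log n / (n:ℝ) ^ ((1:ℝ)/4) := by rw [e3]
        _ = 4 * D * ((n:ℝ) ^ ((1:ℝ)/4))⁻¹ * Real.log n := by
            rw [div_eq_mul_inv]; ring
    calc (ℙ {ω | a n / 2 < |X ω|}).toReal
        ≤ (∫ ω, X ω ^ 2 ∂ℙ) / (a n / 2) ^ 2 := h1
      _ ≤ (D / (n:ℝ)) / (a n / 2) ^ 2 := h2
      _ = 4 * D * (n:ℝ) ^ (-(1/4) : ℝ) * Real.log n := e5
      _ ≤ (4 * D + 1) * (n:ℝ) ^ (-(1/4) : ℝ) * Real.log n := by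
          have hx : (0:ℝ) ≤ (n:ℝ) ^ (-(1/4) : ℝ) * Real.log n := by
            have := Real.rpow_pos_of_pos hnR0 (-(1/4) : ℝ)
            positivity
          calc 4 * D * (n:ℝ) ^ (-(1/4) : ℝ) * Real.log n
              = (4 * D) * ((n:ℝ) ^ (-(1/4) : ℝ) * Real.log n) := by ring
            _ ≤ (4 * D + 1) * ((n:ℝ) ^ (-(1/4) : ℝ) * Real.log n) :=
                mul_le_mul_of_nonneg_right (le_add_of_nonneg_right (by norm_num)) hx
            _ = (4 * D + 1) * (n:ℝ) ^ (-(1/4) : ℝ) * Real.log n := by ring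
  have hDn : 16 * C ^ 2 * ((n:ℝ))⁻¹ / σ2 ≤ D / (n:ℝ) ∧
      8 * C ^ 3 * ((n:ℝ))⁻¹ / σ2 ≤ D / (n:ℝ) := by
    have h1 : D / (n:ℝ) = (16 * C ^ 2 + 8 * C ^ 3) / (σ2 * n) := by
      rw [hD, div_div]
    have h2 : 16 * C ^ 2 * ((n:ℝ))⁻¹ / σ2 = (16 * C ^ 2) / (σ2 * n) := by
      field_simp
    have h3 : 8 * C ^ 3 * ((n:ℝ))⁻¹ / σ2 = (8 * C ^ 3) / (σ2 * n) := by
      field_simp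
    have hσn : (0:ℝ) < σ2 * n := by positivity
    constructor
    · rw [h1, h2]
      exact (div_le_div_iff_of_pos_right hσn).mpr (by linarith only [pow_pos hC 3])
    · rw [h1, h3]
      exact (div_le_div_iff_of_pos_right hσn).mpr (by linarith only [pow_pos hC 2])
  constructor
  · -- part 1 : quadratic term
    set P : Finset ((_ : ℕ) × ℕ) := (Icc 1 n).sigma (fun i => Ioc i n) with hP
    have hPmem : ∀ x ∈ P, 1 ≤ x.1 ∧ x.1 < x.2 ∧ x.2 ≤ n := by
      intro x hx
      rw [hP, Finset.mem_sigma] at hx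
      obtain ⟨h1, h2⟩ := hx
      rw [Finset.mem_Icc] at h1
      rw [Finset.mem_Ioc] at h2
      exact ⟨h1.1, h2.1, h2.2⟩
    set W1 : (_ : ℕ) × ℕ → ℝ :=
      fun x => (1 / (2 * M * δ n)) * (k n x.1 * k n x.2 / M) with hW1
    set Hh1 : (_ : ℕ) × ℕ → Ω → ℝ := fun x ω => hbar (c x.1 ω) (c x.2 ω) with hHh1
    have hbd1 : ∀ x ∈ P, ∀ ω, |Hh1 x ω| ≤ 4 := fun x _ ω =>
      hbarbd _ (hcrange _ ω) _ (hcrange _ ω)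
    have hmeas1 : ∀ x ∈ P, Measurable (Hh1 x) := fun x _ => hHmeas x.1 x.2
    have hXeq : ∀ ω, (1 / (2 * M * δ n)) * ∑ i ∈ Icc 1 n, ∑ j ∈ Ioc i n,
        (k n i * k n j / M) * hbar (c i ω) (c j ω) = ∑ x ∈ P, W1 x * Hh1 x ω := by
      intro ω
      rw [hP, Finset.sum_sigma]
      rw [Finset.mul_sum]
      refine Finset.sum_congr rfl fun i _ => ?_
      rw [Finset.mul_sum]
      refine Finset.sum_congr rfl fun j _ => ?_
      simp only [hW1, hHh1]
      ring
    have hzero1 : ∀ x ∈ P, ∀ y ∈ P, x ≠ y → ∫ ω, Hh1 x ω * Hh1 y ω ∂ℙ = 0 := by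
      intro x hx y hy hxy
      refine hHzero x.1 x.2 y.1 y.2 (hPmem x hx).2.1 (hPmem y hy).2.1 ?_
      intro h
      apply hxy
      rcases x with ⟨x1, x2⟩
      rcases y with ⟨y1, y2⟩
      simp only [Prod.mk.injEq] at h
      simp [h.1, h.2]
    have hmean1 : ∀ x ∈ P, ∫ ω, Hh1 x ω ∂ℙ = 0 := fun x hx =>
      hHmean x.1 x.2 (ne_of_lt (hPmem x hx).2.1)
    have hmemX : MemLp (fun ω => ∑ x ∈ P, W1 x * Hh1 x ω) 2 ℙ := by
      refine aux_memℒp_of_bdd (Finset.measurable_sum P fun x hx =>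
        measurable_const.mul (hmeas1 x hx)) (B := ∑ x ∈ P, |W1 x| * 4) (fun ω => ?_)
      calc |∑ x ∈ P, W1 x * Hh1 x ω| ≤ ∑ x ∈ P, |W1 x * Hh1 x ω| :=
            Finset.abs_sum_le_sum_abs _ _
        _ ≤ ∑ x ∈ P, |W1 x| * 4 := Finset.sum_le_sum fun x hx => by
            rw [abs_mul]
            exact mul_le_mul_of_nonneg_left (hbd1 x hx ω) (abs_nonneg _)
    have hmeanX := aux_mean_integral P W1 Hh1 hmeas1 hbd1 hmean1
    have hsqX : ∫ ω, (∑ x ∈ P, W1 x * Hh1 x ω) ^ 2 ∂ℙ ≤ D / (n:ℝ) := by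
      refine le_trans (aux_sq_integral P W1 Hh1 hmeas1 hbd1 hzero1) ?_
      have hWsq : ∀ x : (_ : ℕ) × ℕ, W1 x ^ 2
          = (1 / (4 * M * σ2)) * (k n x.1 * k n x.2 / M) ^ 2 := by
        intro x
        simp only [hW1]
        rw [mul_pow, hcst]
      have step1 : ∑ x ∈ P, W1 x ^ 2
          = (1 / (4 * M * σ2)) * ∑ x ∈ P, (k n x.1 * k n x.2 / M) ^ 2 := by
        rw [Finset.mul_sum]
        exact Finset.sum_congr rfl fun x _ => hWsq x
      have step2 : ∑ x ∈ P, (k n x.1 * k n x.2 / M) ^ 2 ≤ (κ * (2 * M)) ^ 2 / M ^ 2 := by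
        calc ∑ x ∈ P, (k n x.1 * k n x.2 / M) ^ 2
            = ∑ i ∈ Icc 1 n, ∑ j ∈ Ioc i n, (k n i * k n j / M) ^ 2 := by
              rw [hP, Finset.sum_sigma]
          _ ≤ ∑ i ∈ Icc 1 n, ∑ j ∈ Icc 1 n, (k n i * k n j / M) ^ 2 := by
              refine Finset.sum_le_sum fun i hi => ?_
              refine Finset.sum_le_sum_of_subset_of_nonneg ?_ (fun j _ _ => sq_nonneg _)
              intro j hj
              rw [Finset.mem_Ioc] at hj
              rw [Finset.mem_Icc] at hi ⊢
              exact ⟨le_trans hi.1 (le_of_lt hj.1), hj.2⟩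
          _ = (∑ i ∈ Icc 1 n, (k n i) ^ 2) * (∑ i ∈ Icc 1 n, (k n i) ^ 2) / M ^ 2 := by
              rw [Finset.sum_mul_sum, Finset.sum_div]
              refine Finset.sum_congr rfl fun i _ => ?_
              rw [Finset.sum_div]
              exact Finset.sum_congr rfl fun j _ => by ring
          _ ≤ (κ * (2 * M)) * (κ * (2 * M)) / M ^ 2 := by
              refine (div_le_div_iff_of_pos_right (by positivity)).mpr ?_
              exact mul_le_mul hsumsq hsumsq hsumsq0 (le_trans hsumsq0 hsumsq)
          _ = (κ * (2 * M)) ^ 2 / M ^ 2 := by ring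
      calc 16 * ∑ x ∈ P, W1 x ^ 2
          = 16 * ((1 / (4 * M * σ2)) * ∑ x ∈ P, (k n x.1 * k n x.2 / M) ^ 2) := by
            rw [step1]
        _ ≤ 16 * ((1 / (4 * M * σ2)) * ((κ * (2 * M)) ^ 2 / M ^ 2)) := by
            refine mul_le_mul_of_nonneg_left (mul_le_mul_of_nonneg_left step2 ?_) (by norm_num)
            positivity
        _ = 16 * C ^ 2 * r ^ 2 / σ2 := by
            rw [hκ]
            rw [show (C * r * Real.sqrt M * (2 * M)) ^ 2 = C ^ 2 * r ^ 2 * M * (4 * M ^ 2) by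
              rw [mul_pow, mul_pow, mul_pow, hsqMsq]; ring]
            field_simp
        _ = 16 * C ^ 2 * ((n:ℝ))⁻¹ / σ2 := by rw [hr2]
        _ ≤ D / (n:ℝ) := hDn.1
    have hfin := hkey _ hmemX hmeanX hsqX
    have hseteq : {ω | a n / 2 < |(1 / (2 * M * δ n)) * ∑ i ∈ Icc 1 n, ∑ j ∈ Ioc i n,
          (k n i * k n j / M) * hbar (c i ω) (c j ω)|}
        = {ω | a n / 2 < |∑ x ∈ P, W1 x * Hh1 x ω|} :=
      Set.ext fun ω => by simp only [Set.mem_setOf_eq]; rw [hXeq ω]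
    rw [hseteq]
    exact hfin
  · -- part 2 : linear term
    set W2 : ℕ → ℝ := fun i => (1 / (2 * M * δ n)) * ((k n i) ^ 2 / M) with hW2
    set Hh2 : ℕ → Ω → ℝ := fun i ω => p (c i ω) - p2 with hHh2
    have hbd2 : ∀ i ∈ Icc 1 n, ∀ ω, |Hh2 i ω| ≤ 4 := fun i _ ω =>
      hVbd _ (hcrange i ω)
    have hmeas2 : ∀ i ∈ Icc 1 n, Measurable (Hh2 i) := fun i _ => hVmeas i
    have hXeq2 : ∀ ω, (1 / (2 * M * δ n)) * ∑ i ∈ Icc 1 n,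
        ((k n i) ^ 2 / M) * (p (c i ω) - p2) = ∑ i ∈ Icc 1 n, W2 i * Hh2 i ω := by
      intro ω
      rw [Finset.mul_sum]
      refine Finset.sum_congr rfl fun i _ => ?_
      simp only [hW2, hHh2]
      ring
    have hzero2 : ∀ i ∈ Icc 1 n, ∀ j ∈ Icc 1 n, i ≠ j →
        ∫ ω, Hh2 i ω * Hh2 j ω ∂ℙ = 0 := fun i _ j _ hij => hVzero i j hij
    have hmean2 : ∀ i ∈ Icc 1 n, ∫ ω, Hh2 i ω ∂ℙ = 0 := fun i _ => hVmean i
    have hmemX2 : MemLp (fun ω => ∑ i ∈ Icc 1 n, W2 i * Hh2 i ω) 2 ℙ := by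
      refine aux_memℒp_of_bdd (Finset.measurable_sum _ fun i hi =>
        measurable_const.mul (hmeas2 i hi)) (B := ∑ i ∈ Icc 1 n, |W2 i| * 4) (fun ω => ?_)
      calc |∑ i ∈ Icc 1 n, W2 i * Hh2 i ω| ≤ ∑ i ∈ Icc 1 n, |W2 i * Hh2 i ω| :=
            Finset.abs_sum_le_sum_abs _ _
        _ ≤ ∑ i ∈ Icc 1 n, |W2 i| * 4 := Finset.sum_le_sum fun i hi => by
            rw [abs_mul]
            exact mul_le_mul_of_nonneg_left (hbd2 i hi ω) (abs_nonneg _)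
    have hmeanX2 := aux_mean_integral (Icc 1 n) W2 Hh2 hmeas2 hbd2 hmean2
    have hsqX2 : ∫ ω, (∑ i ∈ Icc 1 n, W2 i * Hh2 i ω) ^ 2 ∂ℙ ≤ D / (n:ℝ) := by
      refine le_trans (aux_sq_integral (Icc 1 n) W2 Hh2 hmeas2 hbd2 hzero2) ?_
      have hWsq : ∀ i : ℕ, W2 i ^ 2 = (1 / (4 * M * σ2)) * ((k n i) ^ 2 / M) ^ 2 := by
        intro i
        simp only [hW2]
        rw [mul_pow, hcst]
      have step1 : ∑ i ∈ Icc 1 n, W2 i ^ 2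
          = (1 / (4 * M * σ2)) * ∑ i ∈ Icc 1 n, ((k n i) ^ 2 / M) ^ 2 := by
        rw [Finset.mul_sum]
        exact Finset.sum_congr rfl fun i _ => hWsq i
      have hk4 : ∑ i ∈ Icc 1 n, ((k n i) ^ 2) ^ 2 ≤ κ ^ 2 * (κ * (2 * M)) := by
        calc ∑ i ∈ Icc 1 n, ((k n i) ^ 2) ^ 2 ≤ ∑ i ∈ Icc 1 n, κ ^ 2 * (k n i) ^ 2 :=
              Finset.sum_le_sum fun i hi => by
                rw [pow_two (((k n i)) ^ 2)]
                exact mul_le_mul_of_nonneg_right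
                  (pow_le_pow_left₀ (hu0 i hi) (huκ i hi) 2) (sq_nonneg _)
          _ = κ ^ 2 * ∑ i ∈ Icc 1 n, (k n i) ^ 2 := by rw [← Finset.mul_sum]
          _ ≤ κ ^ 2 * (κ * (2 * M)) := mul_le_mul_of_nonneg_left hsumsq (sq_nonneg κ)
      have step2 : ∑ i ∈ Icc 1 n, ((k n i) ^ 2 / M) ^ 2
          ≤ κ ^ 2 * (κ * (2 * M)) / M ^ 2 := by
        calc ∑ i ∈ Icc 1 n, ((k n i) ^ 2 / M) ^ 2
            = (∑ i ∈ Icc 1 n, ((k n i) ^ 2) ^ 2) / M ^ 2 := by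
              rw [Finset.sum_div]
              exact Finset.sum_congr rfl fun i _ => by ring
          _ ≤ κ ^ 2 * (κ * (2 * M)) / M ^ 2 :=
              (div_le_div_iff_of_pos_right (by positivity)).mpr hk4
      have hκ3 : κ ^ 3 ≤ C ^ 3 * r ^ 2 * M ^ 2 := by
        have s1 : r ^ 3 ≤ r ^ 2 := pow_le_pow_of_le_one hr0.le hr1 (by norm_num)
        have s2 : Real.sqrt M ^ 3 ≤ Real.sqrt M ^ 4 := pow_le_pow_right₀ hsqM1 (by norm_num)
        calc κ ^ 3 = C ^ 3 * (r ^ 3 * Real.sqrt M ^ 3) := by rw [hκ]; ring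
          _ ≤ C ^ 3 * (r ^ 2 * Real.sqrt M ^ 4) := by
              refine mul_le_mul_of_nonneg_left ?_ (by positivity)
              exact mul_le_mul s1 s2 (by positivity) (by positivity)
          _ = C ^ 3 * r ^ 2 * M ^ 2 := by
              rw [show Real.sqrt M ^ 4 = M ^ 2 by
                rw [show (4:ℕ) = 2 * 2 from rfl, pow_mul, hsqMsq]]
              ring
      calc 16 * ∑ i ∈ Icc 1 n, W2 i ^ 2
          = 16 * ((1 / (4 * M * σ2)) * ∑ i ∈ Icc 1 n, ((k n i) ^ 2 / M) ^ 2) := by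
            rw [step1]
        _ ≤ 16 * ((1 / (4 * M * σ2)) * (κ ^ 2 * (κ * (2 * M)) / M ^ 2)) := by
            refine mul_le_mul_of_nonneg_left (mul_le_mul_of_nonneg_left step2 ?_) (by norm_num)
            positivity
        _ = 8 * κ ^ 3 / (σ2 * M ^ 2) := by
            field_simp
            ring
        _ ≤ 8 * (C ^ 3 * r ^ 2 * M ^ 2) / (σ2 * M ^ 2) :=
            (div_le_div_iff_of_pos_right (by positivity)).mpr (by linarith only [hκ3])
        _ = 8 * C ^ 3 * r ^ 2 / σ2 := by
            field_simp
        _ = 8 * C ^ 3 * ((n:ℝ))⁻¹ / σ2 := by rw [hr2]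
        _ ≤ D / (n:ℝ) := hDn.2
    have hfin := hkey _ hmemX2 hmeanX2 hsqX2
    have hseteq : {ω | a n / 2 < |(1 / (2 * M * δ n)) * ∑ i ∈ Icc 1 n,
          ((k n i) ^ 2 / M) * (p (c i ω) - p2)|}
        = {ω | a n / 2 < |∑ i ∈ Icc 1 n, W2 i * Hh2 i ω|} :=
      Set.ext fun ω => by simp only [Set.mem_setOf_eq]; rw [hXeq2 ω]
    rw [hseteq]
    exact hfin
end

section
/- The modularity Q_n has mean E[Q_n] = −((1 − p_{(2)})/(4m²)) Σ_{i=1}^n k_i² and variance Var(Q_n) = ((p_{(2)} + p_{(2)}² − 2p_{(3)})/(2m²)) Σ_{1≤i≠j≤n} B_{ij}² + ((p_{(3)} − p_{(2)}²)/m²) Σ_{i=1}^n B_{ii}². -/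
open MeasureTheory ProbabilityTheory Finset
set_option linter.unusedSectionVars false
set_option maxRecDepth 8000

lemma aux_ite_mul (P Q : Prop) [Decidable P] [Decidable Q] :
    (if P then (1:ℝ) else 0) * (if Q then 1 else 0) = if P ∧ Q then 1 else 0 := by
  by_cases hP : P <;> by_cases hQ : Q <;> simp [hP, hQ]

section core
variable {Ω : Type*} [MeasureSpace Ω] [IsProbabilityMeasure (ℙ : Measure Ω)]

lemma aux_integrable_ite {P : Ω → Prop} [DecidablePred P] (h : MeasurableSet {ω | P ω}) :
    Integrable (fun ω => if P ω then (1:ℝ) else 0) ℙ := by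
  have : (fun ω => if P ω then (1:ℝ) else 0) = Set.indicator {ω | P ω} (fun _ => 1) := by
    funext ω; simp [Set.indicator_apply, Set.mem_setOf_eq]
  rw [this]; exact (integrable_const 1).indicator h

lemma aux_integral_ite {P : Ω → Prop} [DecidablePred P] (h : MeasurableSet {ω | P ω}) :
    ∫ ω, (if P ω then (1:ℝ) else 0) ∂ℙ = (ℙ {ω | P ω}).toReal := by
  have : (fun ω => if P ω then (1:ℝ) else 0) = Set.indicator {ω | P ω} (fun _ => 1) := by
    funext ω; simp [Set.indicator_apply, Set.mem_setOf_eq]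
  rw [this, integral_indicator_const (1:ℝ) h, smul_eq_mul, mul_one, measureReal_def]

variable {K : ℕ} {p : ℕ → ℝ} {c : ℕ → Ω → ℕ}
variable (hp0 : ∀ j ∈ Icc 1 K, 0 ≤ p j)
variable (hcmeas : ∀ i, Measurable (c i))
variable (hcrange : ∀ i ω, c i ω ∈ Icc 1 K)
variable (hcindep : iIndepFun c ℙ)
variable (hcdist : ∀ i, ∀ j ∈ Icc 1 K, (ℙ {ω | c i ω = j}) = ENNReal.ofReal (p j))

include hcindep in
lemma aux_meas_inter (S : Finset ℕ) (v : ℕ → ℕ) :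
    ℙ (⋂ i ∈ S, {ω | c i ω = v i}) = ∏ i ∈ S, ℙ {ω | c i ω = v i} := by
  refine hcindep.meas_biInter (fun i _ => ⟨{v i}, trivial, ?_⟩)
  ext ω; simp [Set.mem_preimage]

include hcmeas in
lemma aux_Emeas (i u : ℕ) : MeasurableSet {ω | c i ω = u} := by
  have : {ω | c i ω = u} = c i ⁻¹' {u} := by ext ω; simp
  rw [this]; exact hcmeas i (measurableSet_singleton u)

include hcindep in
lemma aux_meas_inter2 (i j : ℕ) (hij : i ≠ j) (u : ℕ) :
    ℙ ({ω | c i ω = u} ∩ {ω | c j ω = u})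
      = ℙ {ω | c i ω = u} * ℙ {ω | c j ω = u} := by
  have h := aux_meas_inter hcindep {i, j} (fun _ => u)
  have hm1 : i ∉ ({j} : Finset ℕ) := by simp [hij]
  rw [Finset.prod_insert hm1, Finset.prod_singleton] at h
  rw [Finset.set_biInter_insert, Finset.set_biInter_singleton] at h
  exact h

include hcindep in
lemma aux_meas_inter3 (i j a : ℕ) (hij : i ≠ j) (hia : i ≠ a) (hja : j ≠ a) (u : ℕ) :
    ℙ ({ω | c i ω = u} ∩ ({ω | c j ω = u} ∩ {ω | c a ω = u}))
      = ℙ {ω | c i ω = u} * (ℙ {ω | c j ω = u} * ℙ {ω | c a ω = u}) := by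
  have h := aux_meas_inter hcindep {i, j, a} (fun _ => u)
  have hm1 : i ∉ ({j, a} : Finset ℕ) := by simp [hij, hia]
  have hm2 : j ∉ ({a} : Finset ℕ) := by simp [hja]
  rw [Finset.prod_insert hm1, Finset.prod_insert hm2, Finset.prod_singleton] at h
  rw [Finset.set_biInter_insert, Finset.set_biInter_insert,
    Finset.set_biInter_singleton] at h
  exact h

include hcindep in
lemma aux_meas_inter4 (i j a b : ℕ) (hij : i ≠ j) (hia : i ≠ a) (hib : i ≠ b)
    (hja : j ≠ a) (hjb : j ≠ b) (hab : a ≠ b) (u v : ℕ) :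
    ℙ ({ω | c i ω = u} ∩ ({ω | c j ω = u} ∩ ({ω | c a ω = v} ∩ {ω | c b ω = v})))
      = ℙ {ω | c i ω = u} * (ℙ {ω | c j ω = u} *
          (ℙ {ω | c a ω = v} * ℙ {ω | c b ω = v})) := by
  classical
  have h := aux_meas_inter hcindep {i, j, a, b} (fun t => if t = a ∨ t = b then v else u)
  have hm1 : i ∉ ({j, a, b} : Finset ℕ) := by simp [hij, hia, hib]
  have hm2 : j ∉ ({a, b} : Finset ℕ) := by simp [hja, hjb]
  have hm3 : a ∉ ({b} : Finset ℕ) := by simp [hab]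
  rw [Finset.prod_insert hm1, Finset.prod_insert hm2, Finset.prod_insert hm3,
    Finset.prod_singleton] at h
  rw [Finset.set_biInter_insert, Finset.set_biInter_insert, Finset.set_biInter_insert,
    Finset.set_biInter_singleton] at h
  simpa [hia, hib, hja, hjb, hab] using h

include hp0 hcdist in
lemma aux_toReal (i u : ℕ) (hu : u ∈ Icc 1 K) : (ℙ {ω | c i ω = u}).toReal = p u := by
  rw [hcdist i u hu, ENNReal.toReal_ofReal (hp0 u hu)]

include hcrange in
lemma aux_expand2 (i j : ℕ) (ω : Ω) :
    (if c i ω = c j ω then (1:ℝ) else 0)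
      = ∑ u ∈ Icc 1 K, (if c i ω = u ∧ c j ω = u then (1:ℝ) else 0) := by
  by_cases h : c i ω = c j ω
  · rw [if_pos h]
    simp only [← h, and_self]
    rw [Finset.sum_ite_eq, if_pos (hcrange i ω)]
  · rw [if_neg h]
    symm; apply Finset.sum_eq_zero; intro u _
    rw [if_neg]; rintro ⟨h1, h2⟩; exact h (h1.trans h2.symm)

include hcrange in
lemma aux_expand3 (x y z : ℕ) (ω : Ω) :
    (if c x ω = c y ω then (1:ℝ) else 0) * (if c x ω = c z ω then (1:ℝ) else 0)
      = ∑ u ∈ Icc 1 K, (if c x ω = u ∧ c y ω = u ∧ c z ω = u then (1:ℝ) else 0) := by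
  by_cases h1 : c x ω = c y ω
  · by_cases h2 : c x ω = c z ω
    · rw [if_pos h1, if_pos h2, one_mul]
      simp only [← h1, ← h2, and_self]
      rw [Finset.sum_ite_eq, if_pos (hcrange x ω)]
    · rw [if_neg h2, mul_zero]
      symm; apply Finset.sum_eq_zero; intro u _
      rw [if_neg]; rintro ⟨ha, _, hc⟩; exact h2 (ha.trans hc.symm)
  · rw [if_neg h1, zero_mul]
    symm; apply Finset.sum_eq_zero; intro u _
    rw [if_neg]; rintro ⟨ha, hb, _⟩; exact h1 (ha.trans hb.symm)

include hp0 hcmeas hcrange hcindep hcdist in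
lemma aux_int_pair (i j : ℕ) (hij : i ≠ j) :
    ∫ ω, (if c i ω = c j ω then (1:ℝ) else 0) ∂ℙ = ∑ u ∈ Icc 1 K, p u ^ 2 := by
  have hms : ∀ u : ℕ, MeasurableSet {ω | c i ω = u ∧ c j ω = u} := by
    intro u
    rw [Set.setOf_and]
    exact (aux_Emeas hcmeas i u).inter (aux_Emeas hcmeas j u)
  calc ∫ ω, (if c i ω = c j ω then (1:ℝ) else 0) ∂ℙ
      = ∫ ω, ∑ u ∈ Icc 1 K, (if c i ω = u ∧ c j ω = u then (1:ℝ) else 0) ∂ℙ := by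
        apply integral_congr_ae; filter_upwards with ω
        exact aux_expand2 hcrange i j ω
    _ = ∑ u ∈ Icc 1 K, ∫ ω, (if c i ω = u ∧ c j ω = u then (1:ℝ) else 0) ∂ℙ := by
        apply integral_finset_sum
        intro u _
        exact aux_integrable_ite (hms u)
    _ = ∑ u ∈ Icc 1 K, p u ^ 2 := by
        apply Finset.sum_congr rfl
        intro u hu
        rw [aux_integral_ite (hms u), Set.setOf_and,
          aux_meas_inter2 hcindep i j hij u, ENNReal.toReal_mul,
          aux_toReal hp0 hcdist i u hu, aux_toReal hp0 hcdist j u hu, sq]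

include hp0 hcmeas hcrange hcindep hcdist in
lemma aux_int_triple (x y z : ℕ) (hxy : x ≠ y) (hxz : x ≠ z) (hyz : y ≠ z) :
    ∫ ω, (if c x ω = c y ω then (1:ℝ) else 0) * (if c x ω = c z ω then (1:ℝ) else 0) ∂ℙ
      = ∑ u ∈ Icc 1 K, p u ^ 3 := by
  have hms : ∀ u : ℕ, MeasurableSet {ω | c x ω = u ∧ c y ω = u ∧ c z ω = u} := by
    intro u
    rw [Set.setOf_and, Set.setOf_and]
    exact (aux_Emeas hcmeas x u).inter ((aux_Emeas hcmeas y u).inter (aux_Emeas hcmeas z u))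
  calc ∫ ω, (if c x ω = c y ω then (1:ℝ) else 0) * (if c x ω = c z ω then (1:ℝ) else 0) ∂ℙ
      = ∫ ω, ∑ u ∈ Icc 1 K, (if c x ω = u ∧ c y ω = u ∧ c z ω = u then (1:ℝ) else 0) ∂ℙ := by
        apply integral_congr_ae; filter_upwards with ω
        exact aux_expand3 hcrange x y z ω
    _ = ∑ u ∈ Icc 1 K, ∫ ω, (if c x ω = u ∧ c y ω = u ∧ c z ω = u then (1:ℝ) else 0) ∂ℙ := by
        apply integral_finset_sum
        intro u _
        exact aux_integrable_ite (hms u)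
    _ = ∑ u ∈ Icc 1 K, p u ^ 3 := by
        apply Finset.sum_congr rfl
        intro u hu
        rw [aux_integral_ite (hms u), Set.setOf_and, Set.setOf_and,
          aux_meas_inter3 hcindep x y z hxy hxz hyz u, ENNReal.toReal_mul, ENNReal.toReal_mul,
          aux_toReal hp0 hcdist x u hu, aux_toReal hp0 hcdist y u hu,
          aux_toReal hp0 hcdist z u hu]
        ring

include hp0 hcmeas hcrange hcindep hcdist in
lemma aux_int_quad (i j a b : ℕ) (hij : i ≠ j) (hia : i ≠ a) (hib : i ≠ b)
    (hja : j ≠ a) (hjb : j ≠ b) (hab : a ≠ b) :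
    ∫ ω, (if c i ω = c j ω then (1:ℝ) else 0) * (if c a ω = c b ω then (1:ℝ) else 0) ∂ℙ
      = (∑ u ∈ Icc 1 K, p u ^ 2) * (∑ u ∈ Icc 1 K, p u ^ 2) := by
  have hms : ∀ u v : ℕ,
      MeasurableSet {ω | c i ω = u ∧ c j ω = u ∧ c a ω = v ∧ c b ω = v} := by
    intro u v
    rw [Set.setOf_and, Set.setOf_and, Set.setOf_and]
    exact (aux_Emeas hcmeas i u).inter ((aux_Emeas hcmeas j u).inter
      ((aux_Emeas hcmeas a v).inter (aux_Emeas hcmeas b v)))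
  have hexp : ∀ ω, (if c i ω = c j ω then (1:ℝ) else 0) * (if c a ω = c b ω then (1:ℝ) else 0)
      = ∑ u ∈ Icc 1 K, ∑ v ∈ Icc 1 K,
          (if c i ω = u ∧ c j ω = u ∧ c a ω = v ∧ c b ω = v then (1:ℝ) else 0) := by
    intro ω
    rw [aux_expand2 hcrange i j ω, aux_expand2 hcrange a b ω, Finset.sum_mul_sum]
    apply Finset.sum_congr rfl; intro u _
    apply Finset.sum_congr rfl; intro v _
    rw [aux_ite_mul]
    congr 1
    simp [and_assoc]
  calc ∫ ω, (if c i ω = c j ω then (1:ℝ) else 0) * (if c a ω = c b ω then (1:ℝ) else 0) ∂ℙ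
      = ∫ ω, ∑ u ∈ Icc 1 K, ∑ v ∈ Icc 1 K,
          (if c i ω = u ∧ c j ω = u ∧ c a ω = v ∧ c b ω = v then (1:ℝ) else 0) ∂ℙ := by
        apply integral_congr_ae; filter_upwards with ω; exact hexp ω
    _ = ∑ u ∈ Icc 1 K, ∑ v ∈ Icc 1 K,
          ∫ ω, (if c i ω = u ∧ c j ω = u ∧ c a ω = v ∧ c b ω = v then (1:ℝ) else 0) ∂ℙ := by
        rw [integral_finset_sum]
        · apply Finset.sum_congr rfl; intro u _
          apply integral_finset_sum
          intro v _
          exact aux_integrable_ite (hms u v)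
        · intro u _
          apply integrable_finset_sum
          intro v _
          exact aux_integrable_ite (hms u v)
    _ = ∑ u ∈ Icc 1 K, ∑ v ∈ Icc 1 K, (p u ^ 2) * (p v ^ 2) := by
        apply Finset.sum_congr rfl; intro u hu
        apply Finset.sum_congr rfl; intro v hv
        rw [aux_integral_ite (hms u v), Set.setOf_and, Set.setOf_and, Set.setOf_and,
          aux_meas_inter4 hcindep i j a b hij hia hib hja hjb hab u v,
          ENNReal.toReal_mul, ENNReal.toReal_mul, ENNReal.toReal_mul,
          aux_toReal hp0 hcdist i u hu, aux_toReal hp0 hcdist j u hu,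
          aux_toReal hp0 hcdist a v hv, aux_toReal hp0 hcdist b v hv]
        ring
    _ = (∑ u ∈ Icc 1 K, p u ^ 2) * (∑ u ∈ Icc 1 K, p u ^ 2) := by
        rw [Finset.sum_mul_sum]

include hcmeas in
lemma aux_fmeas (i j : ℕ) : MeasurableSet {ω | c i ω = c j ω} := by
  have : {ω | c i ω = c j ω} = ⋃ u : ℕ, ({ω | c i ω = u} ∩ {ω | c j ω = u}) := by
    ext ω
    simp only [Set.mem_setOf_eq, Set.mem_iUnion, Set.mem_inter_iff]
    constructor
    · intro h; exact ⟨c j ω, h, rfl⟩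
    · rintro ⟨u, h1, h2⟩; exact h1.trans h2.symm
  rw [this]
  exact MeasurableSet.iUnion fun u => (aux_Emeas hcmeas i u).inter (aux_Emeas hcmeas j u)

include hcmeas in
lemma aux_integrable_f (i j : ℕ) :
    Integrable (fun ω => if c i ω = c j ω then (1:ℝ) else 0) ℙ :=
  aux_integrable_ite (aux_fmeas hcmeas i j)

include hcmeas in
lemma aux_integrable_ff (i j a b : ℕ) :
    Integrable (fun ω => (if c i ω = c j ω then (1:ℝ) else 0)
      * (if c a ω = c b ω then (1:ℝ) else 0)) ℙ := by
  have h : ∀ ω : Ω, (if c i ω = c j ω then (1:ℝ) else 0)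
      * (if c a ω = c b ω then (1:ℝ) else 0)
      = (if (c i ω = c j ω ∧ c a ω = c b ω) then (1:ℝ) else 0) := fun ω => aux_ite_mul _ _
  simp only [h]
  exact aux_integrable_ite (by
    rw [Set.setOf_and]
    exact (aux_fmeas hcmeas i j).inter (aux_fmeas hcmeas a b))

include hp0 hcmeas hcrange hcindep hcdist in
lemma aux_int_mean (q2 : ℝ) (hq2 : q2 = ∑ u ∈ Icc 1 K, p u ^ 2) (i j : ℕ) :
    ∫ ω, (if c i ω = c j ω then (1:ℝ) else 0) ∂ℙ = if i = j then 1 else q2 := by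
  by_cases h : i = j
  · subst h
    rw [if_pos rfl]
    have h1 : ∀ ω : Ω, (if c i ω = c i ω then (1:ℝ) else 0) = 1 := by intro ω; simp
    simp only [h1]
    simp
  · rw [if_neg h, hq2]
    exact aux_int_pair hp0 hcmeas hcrange hcindep hcdist i j h

include hp0 hcmeas hcrange hcindep hcdist in
lemma aux_int_prod (q2 q3 : ℝ) (hq2 : q2 = ∑ u ∈ Icc 1 K, p u ^ 2)
    (hq3 : q3 = ∑ u ∈ Icc 1 K, p u ^ 3) (i j a b : ℕ) :
    ∫ ω, (if c i ω = c j ω then (1:ℝ) else 0) * (if c a ω = c b ω then (1:ℝ) else 0) ∂ℙ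
      = (if i = j then 1 else q2) * (if a = b then 1 else q2)
        + (q3 - q2^2) * (if i = j ∨ a = b then 0 else
            (if a = i then (1:ℝ) else 0) + (if a = j then 1 else 0)
              + (if b = i then 1 else 0) + (if b = j then 1 else 0))
        + (q2 + q2^2 - 2*q3) * (if i = j ∨ a = b then 0 else
            (if a = i ∧ b = j then (1:ℝ) else 0) + (if a = j ∧ b = i then 1 else 0)) := by
  classical
  have hsymm : ∀ (x y : ℕ) (ω : Ω), (if c x ω = c y ω then (1:ℝ) else 0)
      = (if c y ω = c x ω then (1:ℝ) else 0) := fun x y ω => if_congr eq_comm rfl rfl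
  by_cases hij : i = j
  · have h1 : ∀ ω : Ω, (if c i ω = c j ω then (1:ℝ) else 0)
        * (if c a ω = c b ω then (1:ℝ) else 0)
        = (if c a ω = c b ω then (1:ℝ) else 0) := by
      intro ω; rw [hij]; simp
    rw [integral_congr_ae (ae_of_all _ h1),
      aux_int_mean hp0 hcmeas hcrange hcindep hcdist q2 hq2 a b]
    simp [hij]
  · by_cases hab : a = b
    · have h1 : ∀ ω : Ω, (if c i ω = c j ω then (1:ℝ) else 0)
          * (if c a ω = c b ω then (1:ℝ) else 0)
          = (if c i ω = c j ω then (1:ℝ) else 0) := by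
        intro ω; rw [hab]; simp
      rw [integral_congr_ae (ae_of_all _ h1),
        aux_int_pair hp0 hcmeas hcrange hcindep hcdist i j hij, ← hq2]
      simp [hij, hab]
    · have hnji : ¬ j = i := fun h => hij h.symm
      by_cases hai : a = i
      · by_cases hbj : b = j
        · have h1 : ∀ ω : Ω, (if c i ω = c j ω then (1:ℝ) else 0)
              * (if c a ω = c b ω then (1:ℝ) else 0)
              = (if c i ω = c j ω then (1:ℝ) else 0) := by
            intro ω; rw [hai, hbj]; by_cases h : c i ω = c j ω <;> simp [h]
          rw [integral_congr_ae (ae_of_all _ h1),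
            aux_int_pair hp0 hcmeas hcrange hcindep hcdist i j hij, ← hq2]
          rw [hai, hbj]
          simp [hij, hnji]
          try ring
        · have hbi : ¬ b = i := fun h => hab (hai.trans h.symm)
          have h1 : ∀ ω : Ω, (if c i ω = c j ω then (1:ℝ) else 0)
              * (if c a ω = c b ω then (1:ℝ) else 0)
              = (if c i ω = c j ω then (1:ℝ) else 0)
                * (if c i ω = c b ω then (1:ℝ) else 0) := by
            intro ω; rw [hai]
          rw [integral_congr_ae (ae_of_all _ h1),
            aux_int_triple hp0 hcmeas hcrange hcindep hcdist i j b hij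
              (fun h => hbi h.symm) (fun h => hbj h.symm), ← hq3]
          have hib : ¬ i = b := fun h => hab (hai.trans h)
          rw [hai]
          simp [hij, hnji, hbi, hbj, hib]
          try ring
      · by_cases haj : a = j
        · by_cases hbi : b = i
          · have h1 : ∀ ω : Ω, (if c i ω = c j ω then (1:ℝ) else 0)
                * (if c a ω = c b ω then (1:ℝ) else 0)
                = (if c i ω = c j ω then (1:ℝ) else 0) := by
              intro ω; rw [haj, hbi]
              by_cases h : c i ω = c j ω
              · rw [if_pos h, if_pos h.symm]; norm_num
              · have h' : ¬ c j ω = c i ω := fun hh => h hh.symm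
                simp [h, h']
            rw [integral_congr_ae (ae_of_all _ h1),
              aux_int_pair hp0 hcmeas hcrange hcindep hcdist i j hij, ← hq2]
            rw [haj, hbi]
            simp [hij, hnji]
            try ring
          · have hbj2 : ¬ b = j := fun h => hab (haj.trans h.symm)
            have h1 : ∀ ω : Ω, (if c i ω = c j ω then (1:ℝ) else 0)
                * (if c a ω = c b ω then (1:ℝ) else 0)
                = (if c j ω = c i ω then (1:ℝ) else 0)
                  * (if c j ω = c b ω then (1:ℝ) else 0) := by
              intro ω; rw [haj, hsymm i j ω]
            rw [integral_congr_ae (ae_of_all _ h1),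
              aux_int_triple hp0 hcmeas hcrange hcindep hcdist j i b hnji
                (fun h => hbj2 h.symm) (fun h => hbi h.symm), ← hq3]
            have hjb : ¬ j = b := fun h => hab (haj.trans h)
            rw [haj]
            simp [hij, hnji, hbi, hbj2, hjb]
            try ring
        · by_cases hbi : b = i
          · have h1 : ∀ ω : Ω, (if c i ω = c j ω then (1:ℝ) else 0)
                * (if c a ω = c b ω then (1:ℝ) else 0)
                = (if c i ω = c j ω then (1:ℝ) else 0)
                  * (if c i ω = c a ω then (1:ℝ) else 0) := by
              intro ω; rw [hbi, hsymm a i ω]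
            rw [integral_congr_ae (ae_of_all _ h1),
              aux_int_triple hp0 hcmeas hcrange hcindep hcdist i j a hij
                (fun h => hai h.symm) (fun h => haj h.symm), ← hq3]
            rw [hbi]
            simp [hij, hnji, hai, haj]
            try ring
          · by_cases hbj : b = j
            · have h1 : ∀ ω : Ω, (if c i ω = c j ω then (1:ℝ) else 0)
                  * (if c a ω = c b ω then (1:ℝ) else 0)
                  = (if c j ω = c i ω then (1:ℝ) else 0)
                    * (if c j ω = c a ω then (1:ℝ) else 0) := by
                intro ω; rw [hbj, hsymm i j ω, hsymm a j ω]
              rw [integral_congr_ae (ae_of_all _ h1),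
                aux_int_triple hp0 hcmeas hcrange hcindep hcdist j i a hnji
                  (fun h => haj h.symm) (fun h => hai h.symm), ← hq3]
              rw [hbj]
              simp [hij, hnji, hai, haj]
              try ring
            · rw [aux_int_quad hp0 hcmeas hcrange hcindep hcdist i j a b hij
                (fun h => hai h.symm) (fun h => hbi h.symm) (fun h => haj h.symm)
                (fun h => hbj h.symm) hab, ← hq2]
              simp [hij, hai, haj, hbi, hbj, hab]
              try ring

end core


lemma sum_if_ne (s : Finset ℕ) (i : ℕ) (hi : i ∈ s) (h : ℕ → ℝ) (hz : ∑ b ∈ s, h b = 0) :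
    ∑ b ∈ s, (if b = i then 0 else h b) = - h i := by
  have hh : ∀ b, (if b = i then (0:ℝ) else h b) = h b - (if b = i then h b else 0) := by
    intro b; by_cases hb : b = i <;> simp [hb]
  rw [Finset.sum_congr rfl (fun b _ => hh b), Finset.sum_sub_distrib, hz,
    Finset.sum_ite_eq' s i h, if_pos hi]
  ring

lemma alg_X1 (s : Finset ℕ) (B : ℕ → ℕ → ℝ)
    (hrow : ∀ i ∈ s, ∑ j ∈ s, B i j = 0) :
    ∑ i ∈ s, ∑ j ∈ s, ∑ a ∈ s, ∑ b ∈ s,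
        (B i j * B a b) * (if i = j ∨ a = b then 0 else if a = i then (1:ℝ) else 0)
      = ∑ i ∈ s, (B i i)^2 := by
  apply Finset.sum_congr rfl; intro i hi
  have hstep : ∀ j ∈ s, ∑ a ∈ s, ∑ b ∈ s,
      (B i j * B a b) * (if i = j ∨ a = b then 0 else if a = i then (1:ℝ) else 0)
      = (if j = i then 0 else B i j * (- B i i)) := by
    intro j hj
    by_cases hij : i = j
    · simp [hij]
    · rw [if_neg (fun h => hij h.symm)]
      have hterm : ∀ a b, (B i j * B a b) *
          (if i = j ∨ a = b then 0 else if a = i then (1:ℝ) else 0)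
          = if a = i then (if b = i then 0 else B i j * B i b) else 0 := by
        intro a b
        by_cases hai : a = i
        · rw [if_pos hai, hai]
          by_cases hbi : b = i
          · rw [if_pos hbi, hbi]; simp
          · rw [if_neg hbi, if_neg (by rintro (h | h); exact hij h; exact hbi h.symm)]
            simp
        · rw [if_neg hai]
          by_cases hg : i = j ∨ a = b <;> simp [hg, hai]
      rw [Finset.sum_congr rfl (fun a _ => Finset.sum_congr rfl (fun b _ => hterm a b))]
      have hpull : ∀ a ∈ s, ∑ b ∈ s, (if a = i then (if b = i then 0 else B i j * B i b) else 0)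
          = if a = i then (∑ b ∈ s, if b = i then 0 else B i j * B i b) else 0 := by
        intro a _; by_cases ha : a = i <;> simp [ha]
      rw [Finset.sum_congr rfl hpull, Finset.sum_ite_eq' s i _, if_pos hi]
      have hz : ∑ b ∈ s, B i j * B i b = 0 := by
        rw [← Finset.mul_sum, hrow i hi, mul_zero]
      rw [sum_if_ne s i hi (fun b => B i j * B i b) hz]
      ring
  rw [Finset.sum_congr rfl hstep]
  have hz2 : ∑ j ∈ s, B i j * (- B i i) = 0 := by
    rw [← Finset.sum_mul, hrow i hi, zero_mul]
  rw [sum_if_ne s i hi (fun j => B i j * (- B i i)) hz2]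
  ring

lemma alg_X3 (s : Finset ℕ) (B : ℕ → ℕ → ℝ)
    (hrow : ∀ i ∈ s, ∑ j ∈ s, B i j = 0)
    (hcol : ∀ i ∈ s, ∑ a ∈ s, B a i = 0) :
    ∑ i ∈ s, ∑ j ∈ s, ∑ a ∈ s, ∑ b ∈ s,
        (B i j * B a b) * (if i = j ∨ a = b then 0 else if b = i then (1:ℝ) else 0)
      = ∑ i ∈ s, (B i i)^2 := by
  apply Finset.sum_congr rfl; intro i hi
  have hstep : ∀ j ∈ s, ∑ a ∈ s, ∑ b ∈ s,
      (B i j * B a b) * (if i = j ∨ a = b then 0 else if b = i then (1:ℝ) else 0)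
      = (if j = i then 0 else B i j * (- B i i)) := by
    intro j hj
    by_cases hij : i = j
    · simp [hij]
    · rw [if_neg (fun h => hij h.symm)]
      have hterm : ∀ a b, (B i j * B a b) *
          (if i = j ∨ a = b then 0 else if b = i then (1:ℝ) else 0)
          = if b = i then (if a = i then 0 else B i j * B a i) else 0 := by
        intro a b
        by_cases hbi : b = i
        · rw [if_pos hbi, hbi]
          by_cases hai : a = i
          · rw [if_pos hai, hai]; simp
          · rw [if_neg hai, if_neg (by rintro (h | h); exact hij h; exact hai h)]
            simp
        · rw [if_neg hbi]
          by_cases hg : i = j ∨ a = b <;> simp [hg, hbi]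
      rw [Finset.sum_congr rfl (fun a _ => Finset.sum_congr rfl (fun b _ => hterm a b))]
      have hpull : ∀ a ∈ s, ∑ b ∈ s, (if b = i then (if a = i then 0 else B i j * B a i) else 0)
          = if a = i then 0 else B i j * B a i := by
        intro a _
        rw [Finset.sum_ite_eq' s i (fun _ => if a = i then 0 else B i j * B a i), if_pos hi]
      rw [Finset.sum_congr rfl hpull]
      have hz : ∑ a ∈ s, B i j * B a i = 0 := by
        rw [← Finset.mul_sum, hcol i hi, mul_zero]
      rw [sum_if_ne s i hi (fun a => B i j * B a i) hz]
      ring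
  rw [Finset.sum_congr rfl hstep]
  have hz2 : ∑ j ∈ s, B i j * (- B i i) = 0 := by
    rw [← Finset.sum_mul, hrow i hi, zero_mul]
  rw [sum_if_ne s i hi (fun j => B i j * (- B i i)) hz2]
  ring

lemma alg_X2 (s : Finset ℕ) (B : ℕ → ℕ → ℝ)
    (hrow : ∀ i ∈ s, ∑ j ∈ s, B i j = 0)
    (hcol : ∀ i ∈ s, ∑ a ∈ s, B a i = 0) :
    ∑ i ∈ s, ∑ j ∈ s, ∑ a ∈ s, ∑ b ∈ s,
        (B i j * B a b) * (if i = j ∨ a = b then 0 else if a = j then (1:ℝ) else 0)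
      = ∑ j ∈ s, (B j j)^2 := by
  rw [Finset.sum_comm]
  apply Finset.sum_congr rfl; intro j hj
  have hstep : ∀ i ∈ s, ∑ a ∈ s, ∑ b ∈ s,
      (B i j * B a b) * (if i = j ∨ a = b then 0 else if a = j then (1:ℝ) else 0)
      = (if i = j then 0 else B i j * (- B j j)) := by
    intro i hi
    by_cases hij : i = j
    · simp [hij]
    · rw [if_neg hij]
      have hterm : ∀ a b, (B i j * B a b) *
          (if i = j ∨ a = b then 0 else if a = j then (1:ℝ) else 0)
          = if a = j then (if b = j then 0 else B i j * B j b) else 0 := by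
        intro a b
        by_cases haj : a = j
        · rw [if_pos haj, haj]
          by_cases hbj : b = j
          · rw [if_pos hbj, hbj]; simp
          · rw [if_neg hbj, if_neg (by rintro (h | h); exact hij h; exact hbj h.symm)]
            simp
        · rw [if_neg haj]
          by_cases hg : i = j ∨ a = b <;> simp [hg, haj]
      rw [Finset.sum_congr rfl (fun a _ => Finset.sum_congr rfl (fun b _ => hterm a b))]
      have hpull : ∀ a ∈ s, ∑ b ∈ s, (if a = j then (if b = j then 0 else B i j * B j b) else 0)
          = if a = j then (∑ b ∈ s, if b = j then 0 else B i j * B j b) else 0 := by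
        intro a _; by_cases ha : a = j <;> simp [ha]
      rw [Finset.sum_congr rfl hpull, Finset.sum_ite_eq' s j _, if_pos hj]
      have hz : ∑ b ∈ s, B i j * B j b = 0 := by
        rw [← Finset.mul_sum, hrow j hj, mul_zero]
      rw [sum_if_ne s j hj (fun b => B i j * B j b) hz]
      ring
  rw [Finset.sum_congr rfl hstep]
  have hz2 : ∑ i ∈ s, B i j * (- B j j) = 0 := by
    rw [← Finset.sum_mul, hcol j hj, zero_mul]
  rw [sum_if_ne s j hj (fun i => B i j * (- B j j)) hz2]
  ring

lemma alg_X4 (s : Finset ℕ) (B : ℕ → ℕ → ℝ)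
    (hrow : ∀ i ∈ s, ∑ j ∈ s, B i j = 0)
    (hcol : ∀ i ∈ s, ∑ a ∈ s, B a i = 0) :
    ∑ i ∈ s, ∑ j ∈ s, ∑ a ∈ s, ∑ b ∈ s,
        (B i j * B a b) * (if i = j ∨ a = b then 0 else if b = j then (1:ℝ) else 0)
      = ∑ j ∈ s, (B j j)^2 := by
  rw [Finset.sum_comm]
  apply Finset.sum_congr rfl; intro j hj
  have hstep : ∀ i ∈ s, ∑ a ∈ s, ∑ b ∈ s,
      (B i j * B a b) * (if i = j ∨ a = b then 0 else if b = j then (1:ℝ) else 0)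
      = (if i = j then 0 else B i j * (- B j j)) := by
    intro i hi
    by_cases hij : i = j
    · simp [hij]
    · rw [if_neg hij]
      have hterm : ∀ a b, (B i j * B a b) *
          (if i = j ∨ a = b then 0 else if b = j then (1:ℝ) else 0)
          = if b = j then (if a = j then 0 else B i j * B a j) else 0 := by
        intro a b
        by_cases hbj : b = j
        · rw [if_pos hbj, hbj]
          by_cases haj : a = j
          · rw [if_pos haj, haj]; simp
          · rw [if_neg haj, if_neg (by rintro (h | h); exact hij h; exact haj h)]
            simp
        · rw [if_neg hbj]
          by_cases hg : i = j ∨ a = b <;> simp [hg, hbj]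
      rw [Finset.sum_congr rfl (fun a _ => Finset.sum_congr rfl (fun b _ => hterm a b))]
      have hpull : ∀ a ∈ s, ∑ b ∈ s, (if b = j then (if a = j then 0 else B i j * B a j) else 0)
          = if a = j then 0 else B i j * B a j := by
        intro a _
        rw [Finset.sum_ite_eq' s j (fun _ => if a = j then 0 else B i j * B a j), if_pos hj]
      rw [Finset.sum_congr rfl hpull]
      have hz : ∑ a ∈ s, B i j * B a j = 0 := by
        rw [← Finset.mul_sum, hcol j hj, mul_zero]
      rw [sum_if_ne s j hj (fun a => B i j * B a j) hz]
      ring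
  rw [Finset.sum_congr rfl hstep]
  have hz2 : ∑ i ∈ s, B i j * (- B j j) = 0 := by
    rw [← Finset.sum_mul, hcol j hj, zero_mul]
  rw [sum_if_ne s j hj (fun i => B i j * (- B j j)) hz2]
  ring

lemma alg_psi (s : Finset ℕ) (B : ℕ → ℕ → ℝ)
    (hsym : ∀ i ∈ s, ∀ j ∈ s, B i j = B j i) :
    ∑ i ∈ s, ∑ j ∈ s, ∑ a ∈ s, ∑ b ∈ s,
        (B i j * B a b) * (if i = j ∨ a = b then 0 else
          (if a = i ∧ b = j then (1:ℝ) else 0) + (if a = j ∧ b = i then 1 else 0))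
      = 2 * ∑ i ∈ s, ∑ j ∈ s, (if i ≠ j then (B i j)^2 else 0) := by
  rw [Finset.mul_sum]
  apply Finset.sum_congr rfl; intro i hi
  rw [Finset.mul_sum]
  apply Finset.sum_congr rfl; intro j hj
  by_cases hij : i = j
  · simp [hij]
  · have hnji : ¬ j = i := fun h => hij h.symm
    have hterm : ∀ a b, (B i j * B a b) * (if i = j ∨ a = b then 0 else
        (if a = i ∧ b = j then (1:ℝ) else 0) + (if a = j ∧ b = i then 1 else 0))
        = (if a = i then (if b = j then B i j * B i j else 0) else 0)
          + (if a = j then (if b = i then B i j * B j i else 0) else 0) := by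
      intro a b
      by_cases hai : a = i
      · by_cases hbj : b = j
        · rw [hai, hbj]
          have hg : ¬ (i = j ∨ i = j) := by rintro (h | h) <;> exact hij h
          rw [if_neg hg]
          have h2 : ¬ (i = j ∧ j = i) := fun h => hij h.1
          simp [hij, h2]
        · have h1 : ¬ (a = i ∧ b = j) := fun h => hbj h.2
          have h2 : ¬ a = j := fun h => hij (hai.symm.trans h)
          have h3 : ¬ (a = j ∧ b = i) := fun h => h2 h.1
          simp [h1, h3, hbj, h2]
      · by_cases haj : a = j
        · by_cases hbi : b = i
          · rw [haj, hbi]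
            have hg : ¬ (i = j ∨ j = i) := by
              rintro (h | h); exact hij h; exact hij h.symm
            rw [if_neg hg]
            have h1 : ¬ (j = i ∧ i = j) := fun h => hij h.2
            simp [hij, h1, hnji]
          · have h1 : ¬ (a = i ∧ b = j) := fun h => hai h.1
            have h3 : ¬ (a = j ∧ b = i) := fun h => hbi h.2
            simp [h1, h3, hai, hbi]
        · have h1 : ¬ (a = i ∧ b = j) := fun h => hai h.1
          have h3 : ¬ (a = j ∧ b = i) := fun h => haj h.1
          simp [h1, h3, hai, haj]
    rw [Finset.sum_congr rfl (fun a _ => Finset.sum_congr rfl (fun b _ => hterm a b))]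
    rw [Finset.sum_congr rfl (fun a (_ : a ∈ s) => Finset.sum_add_distrib)]
    rw [Finset.sum_add_distrib]
    have hpull1 : ∀ a ∈ s, ∑ b ∈ s, (if a = i then (if b = j then B i j * B i j else 0) else 0)
        = if a = i then B i j * B i j else 0 := by
      intro a _
      by_cases ha : a = i
      · simp only [if_pos ha]
        rw [Finset.sum_ite_eq' s j (fun _ => B i j * B i j), if_pos hj]
      · simp [ha]
    have hpull2 : ∀ a ∈ s, ∑ b ∈ s, (if a = j then (if b = i then B i j * B j i else 0) else 0)
        = if a = j then B i j * B j i else 0 := by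
      intro a _
      by_cases ha : a = j
      · simp only [if_pos ha]
        rw [Finset.sum_ite_eq' s i (fun _ => B i j * B j i), if_pos hi]
      · simp [ha]
    rw [Finset.sum_congr rfl hpull1, Finset.sum_congr rfl hpull2,
      Finset.sum_ite_eq' s i (fun _ => B i j * B i j), if_pos hi,
      Finset.sum_ite_eq' s j (fun _ => B i j * B j i), if_pos hj,
      ← hsym i hi j hj, if_pos hij]
    ring

lemma alg_mean (s : Finset ℕ) (B : ℕ → ℕ → ℝ) (q2 : ℝ)
    (hrow : ∀ i ∈ s, ∑ j ∈ s, B i j = 0) :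
    ∑ i ∈ s, ∑ j ∈ s, B i j * (if i = j then 1 else q2) = (1 - q2) * ∑ i ∈ s, B i i := by
  rw [Finset.mul_sum]
  apply Finset.sum_congr rfl; intro i hi
  have h1 : ∀ j, B i j * (if i = j then (1:ℝ) else q2)
      = q2 * B i j + (1 - q2) * (if i = j then B i j else 0) := by
    intro j; by_cases h : i = j <;> simp [h] <;> ring
  rw [Finset.sum_congr rfl (fun j _ => h1 j), Finset.sum_add_distrib, ← Finset.mul_sum,
    hrow i hi, mul_zero, ← Finset.mul_sum, Finset.sum_ite_eq s i (B i), if_pos hi, zero_add]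


open MeasureTheory ProbabilityTheory Finset


/-- Mean and variance of the modularity under free labeling. -/
theorem modularity_mean_and_variance
    {Ω : Type*} [MeasureSpace Ω] [IsProbabilityMeasure (ℙ : Measure Ω)]
    (n : ℕ) (A : ℕ → ℕ → ℝ) (m : ℕ) (k : ℕ → ℝ)
    (hA01 : ∀ i ∈ Icc 1 n, ∀ j ∈ Icc 1 n, A i j = 0 ∨ A i j = 1)
    (hAsymm : ∀ i ∈ Icc 1 n, ∀ j ∈ Icc 1 n, A i j = A j i)
    (hAdiag : ∀ i ∈ Icc 1 n, A i i = 0)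
    (hm : 1 ≤ m)
    (hk : ∀ i ∈ Icc 1 n, k i = ∑ j ∈ Icc 1 n, A i j)
    (hksum : ∑ i ∈ Icc 1 n, k i = 2 * (m : ℝ))
    (K : ℕ) (hK : 1 ≤ K) (p : ℕ → ℝ)
    (hp0 : ∀ j ∈ Icc 1 K, 0 ≤ p j) (hp1 : ∑ j ∈ Icc 1 K, p j = 1)
    (p2 p3 : ℝ)
    (hp2 : p2 = ∑ j ∈ Icc 1 K, (p j) ^ 2) (hp3 : p3 = ∑ j ∈ Icc 1 K, (p j) ^ 3)
    (c : ℕ → Ω → ℕ)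
    (hcmeas : ∀ i, Measurable (c i))
    (hcrange : ∀ i ω, c i ω ∈ Icc 1 K)
    (hcindep : iIndepFun c ℙ)
    (hcdist : ∀ i, ∀ j ∈ Icc 1 K, (ℙ {ω | c i ω = j}) = ENNReal.ofReal (p j))
    (B : ℕ → ℕ → ℝ) (hB : ∀ i j, B i j = A i j - k i * k j / (2 * (m : ℝ)))
    (Q : Ω → ℝ)
    (hQ : ∀ ω, Q ω = (1 / (2 * (m : ℝ))) *
      ∑ i ∈ Icc 1 n, ∑ j ∈ Icc 1 n, B i j * (if c i ω = c j ω then (1 : ℝ) else 0)) :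
    (∫ ω, Q ω ∂ℙ = -((1 - p2) / (4 * (m : ℝ) ^ 2)) * ∑ i ∈ Icc 1 n, (k i) ^ 2)
    ∧ variance Q ℙ
        = ((p2 + p2 ^ 2 - 2 * p3) / (2 * (m : ℝ) ^ 2)) *
            (∑ i ∈ Icc 1 n, ∑ j ∈ Icc 1 n, if i ≠ j then (B i j) ^ 2 else 0)
          + ((p3 - p2 ^ 2) / (m : ℝ) ^ 2) * ∑ i ∈ Icc 1 n, (B i i) ^ 2 := by
  classical
  have hm1 : (1:ℝ) ≤ (m:ℝ) := by exact_mod_cast hm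
  have hmpos : (0:ℝ) < (m:ℝ) := by linarith
  have hmne : (m:ℝ) ≠ 0 := ne_of_gt hmpos
  have h2mne : (2*(m:ℝ)) ≠ 0 := by positivity
  -- properties of B
  have hrow : ∀ i ∈ Icc 1 n, ∑ j ∈ Icc 1 n, B i j = 0 := by
    intro i hi
    have h1 : ∑ j ∈ Icc 1 n, B i j
        = (∑ j ∈ Icc 1 n, A i j) - (k i * ∑ j ∈ Icc 1 n, k j) / (2*(m:ℝ)) := by
      rw [Finset.sum_congr rfl (fun j _ => hB i j), Finset.sum_sub_distrib]
      congr 1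
      rw [Finset.mul_sum, Finset.sum_div]
    rw [h1, ← hk i hi, hksum]
    field_simp
    ring
  have hsymB : ∀ i ∈ Icc 1 n, ∀ j ∈ Icc 1 n, B i j = B j i := by
    intro i hi j hj; rw [hB i j, hB j i, hAsymm i hi j hj]; ring
  have hcol : ∀ i ∈ Icc 1 n, ∑ a ∈ Icc 1 n, B a i = 0 := by
    intro i hi
    rw [Finset.sum_congr rfl (fun a ha => hsymB a ha i hi)]
    exact hrow i hi
  have hdiag : ∀ i ∈ Icc 1 n, B i i = -(k i ^ 2) / (2*(m:ℝ)) := by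
    intro i hi; rw [hB i i, hAdiag i hi]; ring
  -- integrability
  have hintf : ∀ i j : ℕ,
      Integrable (fun ω => B i j * (if c i ω = c j ω then (1:ℝ) else 0)) ℙ :=
    fun i j => (aux_integrable_f hcmeas i j).const_mul (B i j)
  -- mean
  have hmean0 : ∫ ω, Q ω ∂ℙ = (1/(2*(m:ℝ))) *
      ∑ i ∈ Icc 1 n, ∑ j ∈ Icc 1 n, B i j * (if i = j then 1 else p2) := by
    rw [integral_congr_ae (ae_of_all _ hQ), integral_const_mul]
    congr 1
    rw [integral_finset_sum _ (fun i _ => integrable_finset_sum _ (fun j _ => hintf i j))]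
    refine Finset.sum_congr rfl (fun i _ => ?_)
    rw [integral_finset_sum _ (fun j _ => hintf i j)]
    refine Finset.sum_congr rfl (fun j _ => ?_)
    rw [integral_const_mul, aux_int_mean hp0 hcmeas hcrange hcindep hcdist p2 hp2 i j]
  have hdiagsum : ∑ i ∈ Icc 1 n, B i i = - (∑ i ∈ Icc 1 n, (k i)^2) / (2*(m:ℝ)) := by
    rw [Finset.sum_congr rfl hdiag, ← Finset.sum_div]
    congr 1
    rw [Finset.sum_neg_distrib]
  have hmean : ∫ ω, Q ω ∂ℙ = -((1 - p2) / (4*(m:ℝ)^2)) * ∑ i ∈ Icc 1 n, (k i)^2 := by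
    rw [hmean0, alg_mean (Icc 1 n) B p2 hrow, hdiagsum]
    field_simp
    ring
  refine ⟨hmean, ?_⟩
  -- measurability and boundedness of Q
  have hQeq : Q = fun ω => (1/(2*(m:ℝ))) *
      ∑ i ∈ Icc 1 n, ∑ j ∈ Icc 1 n, B i j * (if c i ω = c j ω then (1:ℝ) else 0) :=
    funext hQ
  have hQm : Measurable Q := by
    rw [hQeq]
    refine Measurable.const_mul ?_ _
    refine Finset.measurable_sum _ (fun i _ => ?_)
    refine Finset.measurable_sum _ (fun j _ => ?_)
    exact (Measurable.ite (aux_fmeas hcmeas i j) measurable_const measurable_const).const_mul _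
  have hbound : ∀ ω, ‖Q ω‖ ≤ (1/(2*(m:ℝ))) * ∑ i ∈ Icc 1 n, ∑ j ∈ Icc 1 n, |B i j| := by
    intro ω
    rw [hQ ω, Real.norm_eq_abs, abs_mul,
      abs_of_nonneg (by positivity : (0:ℝ) ≤ 1/(2*(m:ℝ)))]
    refine mul_le_mul_of_nonneg_left ?_ (by positivity)
    calc |∑ i ∈ Icc 1 n, ∑ j ∈ Icc 1 n, B i j * (if c i ω = c j ω then (1:ℝ) else 0)|
        ≤ ∑ i ∈ Icc 1 n, |∑ j ∈ Icc 1 n, B i j * (if c i ω = c j ω then (1:ℝ) else 0)| :=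
          Finset.abs_sum_le_sum_abs _ _
      _ ≤ ∑ i ∈ Icc 1 n, ∑ j ∈ Icc 1 n, |B i j * (if c i ω = c j ω then (1:ℝ) else 0)| :=
          Finset.sum_le_sum (fun i _ => Finset.abs_sum_le_sum_abs _ _)
      _ ≤ ∑ i ∈ Icc 1 n, ∑ j ∈ Icc 1 n, |B i j| := by
          refine Finset.sum_le_sum (fun i _ => Finset.sum_le_sum (fun j _ => ?_))
          rw [abs_mul]
          by_cases h : c i ω = c j ω <;> simp [h, abs_nonneg]
  have hMem : MemLp Q 2 ℙ := MemLp.of_bound hQm.aestronglyMeasurable _ (ae_of_all _ hbound)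
  rw [variance_eq_sub hMem]
  -- expand Q^2
  have hQsq : ∀ ω, (Q ω)^2 = (1/(2*(m:ℝ)))^2 *
      ∑ i ∈ Icc 1 n, ∑ j ∈ Icc 1 n, ∑ a ∈ Icc 1 n, ∑ b ∈ Icc 1 n,
        (B i j * B a b) * ((if c i ω = c j ω then (1:ℝ) else 0)
          * (if c a ω = c b ω then (1:ℝ) else 0)) := by
    intro ω
    rw [hQ ω, mul_pow]
    congr 1
    rw [sq, Finset.sum_mul_sum]
    refine Finset.sum_congr rfl (fun i _ => ?_)
    rw [Finset.sum_congr rfl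
      (fun a (_ : a ∈ Icc 1 n) => Finset.sum_mul_sum (Icc 1 n) (Icc 1 n) _ _),
      Finset.sum_comm]
    exact Finset.sum_congr rfl (fun j _ => Finset.sum_congr rfl (fun a _ =>
      Finset.sum_congr rfl (fun b _ => by ring)))
  have hintff : ∀ i j a b : ℕ, Integrable (fun ω =>
      (B i j * B a b) * ((if c i ω = c j ω then (1:ℝ) else 0)
        * (if c a ω = c b ω then (1:ℝ) else 0))) ℙ :=
    fun i j a b => (aux_integrable_ff hcmeas i j a b).const_mul _
  have hEQ : ∫ ω, (Q ω)^2 ∂ℙ = (1/(2*(m:ℝ)))^2 *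
      ∑ i ∈ Icc 1 n, ∑ j ∈ Icc 1 n, ∑ a ∈ Icc 1 n, ∑ b ∈ Icc 1 n,
        (B i j * B a b) * ((if i = j then 1 else p2) * (if a = b then 1 else p2)
          + (p3 - p2^2) * (if i = j ∨ a = b then 0 else
              (if a = i then (1:ℝ) else 0) + (if a = j then 1 else 0)
                + (if b = i then 1 else 0) + (if b = j then 1 else 0))
          + (p2 + p2^2 - 2*p3) * (if i = j ∨ a = b then 0 else
              (if a = i ∧ b = j then (1:ℝ) else 0) + (if a = j ∧ b = i then 1 else 0))) := by
    rw [integral_congr_ae (ae_of_all _ hQsq), integral_const_mul]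
    congr 1
    rw [integral_finset_sum _ (fun i _ => integrable_finset_sum _ (fun j _ =>
      integrable_finset_sum _ (fun a _ => integrable_finset_sum _ (fun b _ => hintff i j a b))))]
    refine Finset.sum_congr rfl (fun i _ => ?_)
    rw [integral_finset_sum _ (fun j _ => integrable_finset_sum _ (fun a _ =>
      integrable_finset_sum _ (fun b _ => hintff i j a b)))]
    refine Finset.sum_congr rfl (fun j _ => ?_)
    rw [integral_finset_sum _ (fun a _ => integrable_finset_sum _ (fun b _ => hintff i j a b))]
    refine Finset.sum_congr rfl (fun a _ => ?_)
    rw [integral_finset_sum _ (fun b _ => hintff i j a b)]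
    refine Finset.sum_congr rfl (fun b _ => ?_)
    rw [integral_const_mul, aux_int_prod hp0 hcmeas hcrange hcindep hcdist p2 p3 hp2 hp3 i j a b]
  have hM2 : (∑ i ∈ Icc 1 n, ∑ j ∈ Icc 1 n, B i j * (if i = j then (1:ℝ) else p2))^2
      = ∑ i ∈ Icc 1 n, ∑ j ∈ Icc 1 n, ∑ a ∈ Icc 1 n, ∑ b ∈ Icc 1 n,
          (B i j * B a b) * ((if i = j then (1:ℝ) else p2) * (if a = b then 1 else p2)) := by
    rw [sq, Finset.sum_mul_sum]
    refine Finset.sum_congr rfl (fun i _ => ?_)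
    rw [Finset.sum_congr rfl
      (fun a (_ : a ∈ Icc 1 n) => Finset.sum_mul_sum (Icc 1 n) (Icc 1 n) _ _),
      Finset.sum_comm]
    exact Finset.sum_congr rfl (fun j _ => Finset.sum_congr rfl (fun a _ =>
      Finset.sum_congr rfl (fun b _ => by ring)))
  have hpow : ∫ x, (Q^2) x ∂ℙ = ∫ ω, (Q ω)^2 ∂ℙ := rfl
  rw [hpow, hEQ, hmean0, mul_pow, hM2, ← mul_sub]
  -- combine the quadruple sums
  have csum : ∀ (F G : ℕ → ℕ → ℕ → ℕ → ℝ), (∀ i j a b, F i j a b = G i j a b) →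
      (∑ i ∈ Icc 1 n, ∑ j ∈ Icc 1 n, ∑ a ∈ Icc 1 n, ∑ b ∈ Icc 1 n, F i j a b)
        = ∑ i ∈ Icc 1 n, ∑ j ∈ Icc 1 n, ∑ a ∈ Icc 1 n, ∑ b ∈ Icc 1 n, G i j a b :=
    fun F G h => Finset.sum_congr rfl (fun i _ => Finset.sum_congr rfl (fun j _ =>
      Finset.sum_congr rfl (fun a _ => Finset.sum_congr rfl (fun b _ => h i j a b))))
  have key : (∑ i ∈ Icc 1 n, ∑ j ∈ Icc 1 n, ∑ a ∈ Icc 1 n, ∑ b ∈ Icc 1 n,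
        (B i j * B a b) * ((if i = j then 1 else p2) * (if a = b then 1 else p2)
          + (p3 - p2^2) * (if i = j ∨ a = b then 0 else
              (if a = i then (1:ℝ) else 0) + (if a = j then 1 else 0)
                + (if b = i then 1 else 0) + (if b = j then 1 else 0))
          + (p2 + p2^2 - 2*p3) * (if i = j ∨ a = b then 0 else
              (if a = i ∧ b = j then (1:ℝ) else 0) + (if a = j ∧ b = i then 1 else 0))))
      - (∑ i ∈ Icc 1 n, ∑ j ∈ Icc 1 n, ∑ a ∈ Icc 1 n, ∑ b ∈ Icc 1 n,
          (B i j * B a b) * ((if i = j then (1:ℝ) else p2) * (if a = b then 1 else p2)))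
      = (p3 - p2^2) * (4 * ∑ i ∈ Icc 1 n, (B i i)^2)
        + (p2 + p2^2 - 2*p3) *
            (2 * ∑ i ∈ Icc 1 n, ∑ j ∈ Icc 1 n, (if i ≠ j then (B i j)^2 else 0)) := by
    simp only [← Finset.sum_sub_distrib]
    have h1 : ∀ i j a b : ℕ,
        (B i j * B a b) * ((if i = j then 1 else p2) * (if a = b then 1 else p2)
          + (p3 - p2^2) * (if i = j ∨ a = b then 0 else
              (if a = i then (1:ℝ) else 0) + (if a = j then 1 else 0)
                + (if b = i then 1 else 0) + (if b = j then 1 else 0))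
          + (p2 + p2^2 - 2*p3) * (if i = j ∨ a = b then 0 else
              (if a = i ∧ b = j then (1:ℝ) else 0) + (if a = j ∧ b = i then 1 else 0)))
        - (B i j * B a b) * ((if i = j then (1:ℝ) else p2) * (if a = b then 1 else p2))
        = (p3 - p2^2) * ((B i j * B a b) * ((if i = j ∨ a = b then 0 else
              if a = i then (1:ℝ) else 0)
            + (if i = j ∨ a = b then 0 else if a = j then (1:ℝ) else 0)
            + (if i = j ∨ a = b then 0 else if b = i then (1:ℝ) else 0)
            + (if i = j ∨ a = b then 0 else if b = j then (1:ℝ) else 0)))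
          + (p2 + p2^2 - 2*p3) * ((B i j * B a b) * (if i = j ∨ a = b then 0 else
              (if a = i ∧ b = j then (1:ℝ) else 0) + (if a = j ∧ b = i then 1 else 0))) := by
      intro i j a b
      by_cases hg : i = j ∨ a = b
      · simp [hg]
      · simp only [if_neg hg]
        ring
    rw [csum _ _ h1]
    simp only [mul_add, Finset.sum_add_distrib]
    simp only [← Finset.mul_sum]
    rw [alg_X1 (Icc 1 n) B hrow, alg_X2 (Icc 1 n) B hrow hcol,
      alg_X3 (Icc 1 n) B hrow hcol, alg_X4 (Icc 1 n) B hrow hcol,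
      alg_psi (Icc 1 n) B hsymB]
    ring
  rw [key]
  field_simp
  ring
end
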